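/- arXiv:2602.07500 — 5 statements merged into one kernel-verified Lean document; each statement's English description precedes it below -/
import Mathlib

section
/- For α > 0, β > 0, γ > 0, ω ∈ ℝ and z > |ω|^{1/α}, the Laplace transform of t ↦ t^{β-1} E_{α,β}^{γ}(ω t^{α}) equals z^{αγ-β}/(z^{α}-ω)^{γ}, i.e. ∫₀^∞ e^{-z t} t^{β-1} E_{α,β}^{γ}(ω t^{α}) dt = z^{αγ-β}/(z^{α}-ω)^{γ}. -/
open Real MeasureTheory Set
open Filter Topology


lemma summable_gamma_mul_geom {q : ℝ} (hq : 0 < q) {ρ : ℝ} (hρ : |ρ| < 1) :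
    Summable (fun n : ℕ => Real.Gamma (q + n) / n.factorial * ρ ^ n) := by
  by_cases h0 : ρ = 0
  · subst h0
    apply summable_of_ne_finset_zero (s := {0})
    intro n hn
    simp only [Finset.mem_singleton] at hn
    simp [zero_pow hn]
  · set l : ℝ := (1 + |ρ|) / 2 with hl
    have hρ0 : 0 < |ρ| := abs_pos.mpr h0
    have hρl : |ρ| < l := by rw [hl]; linarith
    have hl1 : l < 1 := by rw [hl]; linarith
    apply summable_of_ratio_norm_eventually_le hl1
    have htend : Tendsto (fun n : ℕ => ((q + n) / (n + 1)) * |ρ|) atTop (𝓝 (1 * |ρ|)) := by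
      have h1 : Tendsto (fun n : ℕ => (q - 1) / ((n : ℝ) + 1)) atTop (𝓝 0) :=
        Tendsto.div_atTop tendsto_const_nhds
          (tendsto_atTop_add_const_right _ 1 tendsto_natCast_atTop_atTop)
      have h2 : Tendsto (fun n : ℕ => (1 + (q - 1) / ((n : ℝ) + 1)) * |ρ|) atTop
          (𝓝 ((1 + 0) * |ρ|)) := (tendsto_const_nhds.add h1).mul_const |ρ|
      have h3 : Tendsto (fun n : ℕ => ((q + n) / (n + 1)) * |ρ|) atTop
          (𝓝 ((1 + 0) * |ρ|)) := by
        refine h2.congr (fun n => ?_)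
        have hne : ((n : ℝ) + 1) ≠ 0 := by positivity
        have : 1 + (q - 1) / ((n : ℝ) + 1) = (q + n) / ((n : ℝ) + 1) := by
          field_simp; ring
        rw [this]
      simpa using h3
    have hev : ∀ᶠ n : ℕ in atTop, ((q + n) / (n + 1)) * |ρ| ≤ l := by
      exact htend.eventually_le_const (by rwa [one_mul])
    filter_upwards [hev] with n hn
    have hqn : 0 < q + n := by positivity
    have hfac : (0 : ℝ) < n.factorial := by positivity
    have hG : 0 < Real.Gamma (q + n) := Real.Gamma_pos_of_pos hqn
    have hgam : Real.Gamma (q + (n + 1 : ℕ)) = (q + n) * Real.Gamma (q + n) := by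
      push_cast
      rw [show q + ((n : ℝ) + 1) = (q + n) + 1 by ring, Real.Gamma_add_one (ne_of_gt hqn)]
    have hnorm : ∀ m : ℕ, ‖Real.Gamma (q + m) / m.factorial * ρ ^ m‖ =
        Real.Gamma (q + m) / m.factorial * |ρ| ^ m := by
      intro m
      have : 0 < Real.Gamma (q + m) := Real.Gamma_pos_of_pos (by positivity)
      rw [Real.norm_eq_abs, abs_mul, abs_div, abs_of_pos this, abs_pow, Nat.abs_cast]
    rw [hnorm, hnorm, hgam]
    have hfs : ((n + 1).factorial : ℝ) = ((n : ℝ) + 1) * n.factorial := by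
      rw [Nat.factorial_succ]; push_cast; ring
    rw [hfs]
    have key : (q + n) * Real.Gamma (q + n) / (((n : ℝ) + 1) * n.factorial) * |ρ| ^ (n + 1)
        = ((q + n) / (n + 1) * |ρ|) * (Real.Gamma (q + n) / n.factorial * |ρ| ^ n) := by
      field_simp
      ring
    rw [key]
    exact mul_le_mul_of_nonneg_right hn (by positivity)

lemma binomial_tsum (g : ℝ) (hg : 0 < g) {x : ℝ} (hx : |x| < 1) :
    ∑' n : ℕ, Real.Gamma (g + n) / (n.factorial * Real.Gamma g) * x ^ n
      = (1 - x) ^ (-g) := by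
  have hGg : 0 < Real.Gamma g := Real.Gamma_pos_of_pos hg
  set c : ℕ → ℝ := fun n => Real.Gamma (g + n) / (n.factorial * Real.Gamma g) with hc
  clear_value c
  have hcpos : ∀ n, 0 < c n := fun n => by
    have : 0 < Real.Gamma (g + n) := Real.Gamma_pos_of_pos (by positivity)
    rw [hc]; positivity
  have hc0 : c 0 = 1 := by
    simp [hc, ne_of_gt hGg]
  have crec : ∀ n : ℕ, c (n + 1) * ((n : ℝ) + 1) = (g + n) * c n := by
    intro n
    have hqn : (0:ℝ) < g + n := by positivity
    rw [hc]
    simp only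
    rw [show g + ((n : ℕ) + 1 : ℕ) = (g + n) + 1 by push_cast; ring,
      Real.Gamma_add_one (ne_of_gt hqn), Nat.factorial_succ]
    push_cast
    field_simp
  have hsum : ∀ y : ℝ, |y| < 1 → Summable (fun n => c n * y ^ n) := by
    intro y hy
    have := (summable_gamma_mul_geom hg hy).div_const (Real.Gamma g)
    refine this.congr (fun n => ?_)
    rw [hc]; simp only; ring
  have hsum' : ∀ y : ℝ, |y| < 1 → Summable (fun n => (g + n) * c n * y ^ n) := by
    intro y hy
    have := (summable_gamma_mul_geom (by positivity : (0:ℝ) < g + 1) hy).div_const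
      (Real.Gamma g)
    refine this.congr (fun n => ?_)
    have hqn : (0:ℝ) < g + n := by positivity
    have hG1 : Real.Gamma (g + 1 + n) = (g + n) * Real.Gamma (g + n) := by
      rw [show g + 1 + (n:ℝ) = (g + n) + 1 by ring, Real.Gamma_add_one (ne_of_gt hqn)]
    rw [hG1, hc]
    simp only
    ring
  set S : ℝ → ℝ := fun y => ∑' n, c n * y ^ n with hS
  set D : ℝ → ℝ := fun y => ∑' n, c n * ((n : ℝ) * y ^ (n - 1)) with hD
  clear_value S D
  have hsumD : ∀ y : ℝ, |y| < 1 → Summable (fun n => c n * ((n : ℝ) * y ^ (n - 1))) := by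
    intro y hy
    rw [← summable_nat_add_iff 1]
    refine (hsum' y hy).congr (fun n => ?_)
    simp only [Nat.add_sub_cancel, Nat.cast_add, Nat.cast_one]
    linear_combination (-(y ^ n)) * crec n
  have hDE : ∀ y : ℝ, |y| < 1 → (1 - y) * D y = g * S y := by
    intro y hy
    have h1 : D y = ∑' n, c (n + 1) * (((n:ℝ) + 1) * y ^ n) := by
      rw [hD]
      simp only
      rw [(hsumD y hy).tsum_eq_zero_add]
      simp
    have h2 : ∀ n : ℕ, c (n + 1) * (((n:ℝ) + 1) * y ^ n)
        = g * (c n * y ^ n) + y * (c n * ((n:ℝ) * y ^ (n - 1))) := by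
      intro n
      have hr := crec n
      have hyy : y * (c n * ((n:ℝ) * y ^ (n - 1))) = (n:ℝ) * (c n * y ^ n) := by
        cases n with
        | zero => simp
        | succ m => simp only [Nat.add_sub_cancel]; rw [pow_succ]; push_cast; ring
      rw [hyy]
      linear_combination (y ^ n) * hr
    have e1 : ∑' n, (g * (c n * y ^ n) + y * (c n * ((n:ℝ) * y ^ (n - 1))))
        = g * S y + y * D y := by
      simp only [hS, hD]
      rw [((hsum y hy).mul_left g).tsum_add ((hsumD y hy).mul_left y),
        tsum_mul_left, tsum_mul_left]
    have h3 : D y = g * S y + y * D y := by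
      rw [← e1, h1]
      exact tsum_congr h2
    linarith
  have hder : ∀ ρ : ℝ, 0 < ρ → ρ < 1 → ∀ y ∈ Ioo (-ρ) ρ, HasDerivAt S (D y) y := by
    intro ρ hρ0 hρ1 y hy
    simp only [hS, hD]
    have hρa : |ρ| < 1 := by rw [abs_of_pos hρ0]; exact hρ1
    have hun : Summable (fun n => c n * ((n : ℝ) * ρ ^ (n - 1))) := hsumD ρ hρa
    have h0m : (0:ℝ) ∈ Ioo (-ρ) ρ := ⟨by linarith, hρ0⟩
    refine hasDerivAt_tsum_of_isPreconnected hun isOpen_Ioo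
      (convex_Ioo _ _).isPreconnected
      (g := fun n y => c n * y ^ n) (g' := fun n y => c n * ((n:ℝ) * y ^ (n - 1)))
      (fun n z _ => (hasDerivAt_pow n z).const_mul (c n)) ?_ h0m ?_ hy
    · intro n z hz
      have hz' : |z| ≤ ρ := by
        rw [abs_le]; exact ⟨hz.1.le, hz.2.le⟩
      rw [Real.norm_eq_abs, abs_mul, abs_of_pos (hcpos n), abs_mul, Nat.abs_cast, abs_pow]
      gcongr <;> first | exact abs_nonneg z | exact hz' | exact (hcpos n).le
    · exact (hsum 0 (by norm_num)).congr (fun n => rfl)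
  have key : ∀ y : ℝ, |y| < 1 → (1 - y) ^ g * S y = 1 := by
    intro x hx
    set ρ : ℝ := (|x| + 1) / 2 with hρ
    have hxρ : |x| < ρ := by rw [hρ]; linarith
    have hρ0 : 0 < ρ := by positivity
    have hρ1 : ρ < 1 := by rw [hρ]; linarith
    set F : ℝ → ℝ := fun y => (1 - y) ^ g * S y with hF
    have hFd : ∀ y ∈ Ioo (-ρ) ρ, HasDerivAt F 0 y := by
      intro y hy
      obtain ⟨hya, hyb⟩ := hy
      have hy1 : |y| < 1 := by rw [abs_lt]; constructor <;> linarith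
      have h1y : 0 < 1 - y := by linarith
      have hD1 : HasDerivAt (fun y : ℝ => 1 - y) (-1) y := by
        simpa using (hasDerivAt_id y).const_sub 1
      have hD2 : HasDerivAt (fun y : ℝ => (1 - y) ^ g) (-1 * g * (1 - y) ^ (g - 1)) y :=
        hD1.rpow_const (Or.inl (ne_of_gt h1y))
      have hD3 := hD2.mul (hder ρ hρ0 hρ1 y ⟨hya, hyb⟩)
      refine hD3.congr_deriv ?_
      symm
      have hpow : (1 - y) ^ g = (1 - y) ^ (g - 1) * (1 - y) := by
        rw [← Real.rpow_add_one (ne_of_gt h1y) (g - 1)]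
        congr 1
        ring
      rw [hpow]
      linear_combination (-(1 - y) ^ (g - 1)) * hDE y hy1
    have hsub : Icc (min 0 x) (max 0 x) ⊆ Ioo (-ρ) ρ := by
      intro y hy
      obtain ⟨hy1, hy2⟩ := hy
      constructor
      · have : -|x| ≤ min 0 x := le_min (by simp) (neg_abs_le x)
        linarith
      · have : max 0 x ≤ |x| := max_le (abs_nonneg x) (le_abs_self x)
        linarith
    have hcont : ContinuousOn F (Icc (min 0 x) (max 0 x)) := fun y hy =>
      (hFd y (hsub hy)).continuousAt.continuousWithinAt
    have hconst := constant_of_has_deriv_right_zero hcont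
      (fun y hy => ((hFd y (hsub (Ico_subset_Icc_self hy))).hasDerivWithinAt))
    have hx_mem : x ∈ Icc (min 0 x) (max 0 x) := ⟨min_le_right _ _, le_max_right _ _⟩
    have h0_mem : (0:ℝ) ∈ Icc (min 0 x) (max 0 x) := ⟨min_le_left _ _, le_max_left _ _⟩
    have hS0 : S 0 = 1 := by
      rw [hS]
      simp only
      rw [tsum_eq_single 0 (fun n hn => by simp [zero_pow hn])]
      simp [hc0]
    have hFF : F x = F 0 := by rw [hconst x hx_mem, hconst 0 h0_mem]
    have hFx : (1 - x) ^ g * S x = F 0 := by rw [← hFF]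
    rw [hFx]
    simp only [hF]
    simp [hS0]
  have h1x : 0 < 1 - x := by rw [abs_lt] at hx; linarith [hx.2]
  have hk := key x hx
  have hne : (1 - x) ^ g ≠ 0 := by positivity
  rw [Real.rpow_neg h1x.le]
  have hfin : S x = ((1 - x) ^ g)⁻¹ := by
    field_simp
    linear_combination hk
  calc ∑' n : ℕ, Real.Gamma (g + n) / (n.factorial * Real.Gamma g) * x ^ n
      = S x := by rw [hS]; exact tsum_congr (fun n => by rw [hc])
    _ = ((1 - x) ^ g)⁻¹ := hfin

/-- Three-parameter Mittag-Leffler function `E_{a,b}^{g}(t)`. -/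
noncomputable def ML3 (a b g t : ℝ) : ℝ :=
  ∑' r : ℕ, Real.Gamma (g + r) * t ^ r /
    ((r.factorial : ℝ) * Real.Gamma g * Real.Gamma (a * r + b))


set_option maxHeartbeats 1000000 in
theorem laplace_transform_mittagLeffler3
    (a b g ω z : ℝ) (ha : 0 < a) (hb : 0 < b) (hg : 0 < g)
    (hz : |ω| ^ (1 / a) < z) :
    ∫ t in Set.Ioi (0 : ℝ), Real.exp (-z * t) * t ^ (b - 1) * ML3 a b g (ω * t ^ a)
      = z ^ (a * g - b) / (z ^ a - ω) ^ g := by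
  have hz0 : 0 < z := lt_of_le_of_lt (Real.rpow_nonneg (abs_nonneg ω) _) hz
  have hza : 0 < z ^ a := Real.rpow_pos_of_pos hz0 a
  have hωz : |ω| < z ^ a := by
    have h1 : (|ω| ^ (1 / a)) ^ a < z ^ a :=
      Real.rpow_lt_rpow (Real.rpow_nonneg (abs_nonneg ω) _) hz ha
    rwa [← Real.rpow_mul (abs_nonneg ω), one_div, inv_mul_cancel₀ (ne_of_gt ha),
      Real.rpow_one] at h1
  have hGg : 0 < Real.Gamma g := Real.Gamma_pos_of_pos hg
  set x : ℝ := ω / z ^ a with hx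
  have hx1 : |x| < 1 := by
    rw [hx, abs_div, abs_of_pos hza]
    exact (div_lt_one hza).mpr hωz
  -- the summand functions
  set C : ℕ → ℝ := fun r =>
    Real.Gamma (g + r) * ω ^ r / (r.factorial * Real.Gamma g * Real.Gamma (a * r + b))
    with hC
  set F : ℕ → ℝ → ℝ := fun r t => C r * (t ^ (a * r + b - 1) * Real.exp (-(z * t))) with hF
  clear_value F
  have hab : ∀ r : ℕ, (0:ℝ) < a * r + b := fun r => by positivity
  have hGab : ∀ r : ℕ, 0 < Real.Gamma (a * r + b) := fun r => Real.Gamma_pos_of_pos (hab r)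
  -- pointwise identity on Ioi 0
  have hpt : ∀ t ∈ Ioi (0:ℝ), Real.exp (-z * t) * t ^ (b - 1) * ML3 a b g (ω * t ^ a)
      = ∑' r, F r t := by
    intro t ht
    rw [mem_Ioi] at ht
    rw [ML3, ← tsum_mul_left]
    refine tsum_congr (fun r => ?_)
    rw [hF, hC]
    simp only
    have h1 : (ω * t ^ a) ^ r = ω ^ r * t ^ (a * r) := by
      rw [mul_pow, ← Real.rpow_natCast (t ^ a) r, ← Real.rpow_mul ht.le]
    have h2 : t ^ (b - 1) * t ^ (a * r) = t ^ (a * r + b - 1) := by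
      rw [← Real.rpow_add ht]
      congr 1
      ring
    rw [h1, show Real.exp (-z * t) = Real.exp (-(z * t)) by rw [neg_mul]]
    rw [show Real.exp (-(z*t)) * t ^ (b-1) * (Real.Gamma (g+r) * (ω^r * t^(a*r)) /
        (r.factorial * Real.Gamma g * Real.Gamma (a*r+b)))
      = Real.Gamma (g+r) * ω^r / (r.factorial * Real.Gamma g * Real.Gamma (a*r+b)) *
        ((t ^ (b-1) * t ^ (a*r)) * Real.exp (-(z*t))) by ring, h2]
  -- integrability of each term
  have hInt : ∀ r : ℕ, IntegrableOn (F r) (Ioi (0:ℝ)) := by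
    intro r
    have h := integrableOn_rpow_mul_exp_neg_mul_rpow
      (show (-1:ℝ) < a * r + b - 1 by linarith [hab r]) zero_lt_one hz0
    simp only [Real.rpow_one] at h
    have h2 : IntegrableOn (fun t : ℝ => t ^ (a * r + b - 1) * Real.exp (-(z * t)))
        (Ioi 0) := by
      refine h.congr_fun (fun t _ => ?_) measurableSet_Ioi
      beta_reduce
      rw [neg_mul]
    rw [hF]
    exact h2.const_mul (C r)
  -- value of each integral
  have hval : ∀ r : ℕ, ∫ t in Ioi (0:ℝ), F r t
      = C r * ((1 / z) ^ (a * r + b) * Real.Gamma (a * r + b)) := by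
    intro r
    rw [hF]
    simp only
    rw [integral_const_mul, integral_rpow_mul_exp_neg_mul_Ioi (hab r) hz0]
  -- norm integrals
  have hnormval : ∀ r : ℕ, (∫ t in Ioi (0:ℝ), ‖F r t‖)
      = |C r| * ((1 / z) ^ (a * r + b) * Real.Gamma (a * r + b)) := by
    intro r
    have : ∀ t ∈ Ioi (0:ℝ), ‖F r t‖
        = |C r| * (t ^ (a * r + b - 1) * Real.exp (-(z * t))) := by
      intro t ht
      rw [mem_Ioi] at ht
      rw [hF]
      simp only
      rw [Real.norm_eq_abs, abs_mul, abs_mul, abs_of_pos (Real.rpow_pos_of_pos ht _),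
        abs_of_pos (Real.exp_pos _)]
    rw [setIntegral_congr_fun measurableSet_Ioi this, integral_const_mul,
      integral_rpow_mul_exp_neg_mul_Ioi (hab r) hz0]
  -- closed form of the r-th integral
  have hterm : ∀ r : ℕ, C r * ((1 / z) ^ (a * r + b) * Real.Gamma (a * r + b))
      = (1 / z) ^ b * (Real.Gamma (g + r) / (r.factorial * Real.Gamma g) * x ^ r) := by
    intro r
    have hiz : (0:ℝ) < 1 / z := by positivity
    have e1 : (1 / z : ℝ) ^ (a * r + b) = ((1/z) ^ a) ^ r * (1/z) ^ b := by
      rw [Real.rpow_add hiz, ← Real.rpow_natCast ((1/z) ^ a) r, ← Real.rpow_mul hiz.le]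
    have e2 : ((1/z:ℝ) ^ a) = (z ^ a)⁻¹ := by
      rw [one_div, ← Real.rpow_neg_one z, ← Real.rpow_mul hz0.le, mul_comm,
        Real.rpow_mul hz0.le, Real.rpow_neg_one]
    have e3 : ω ^ r * ((z ^ a)⁻¹) ^ r = x ^ r := by
      rw [hx, div_eq_mul_inv, mul_pow]
    rw [hC]
    simp only
    rw [e1, e2, ← e3]
    field_simp
  -- summability of norm integrals
  have hsumnorm : Summable (fun r => ∫ t in Ioi (0:ℝ), ‖F r t‖) := by
    have habs : ∀ r : ℕ, (∫ t in Ioi (0:ℝ), ‖F r t‖)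
        = (1 / z) ^ b / Real.Gamma g * (Real.Gamma (g + r) / r.factorial * |x| ^ r) := by
      intro r
      rw [hnormval r]
      have : |C r| = Real.Gamma (g + r) * |ω| ^ r /
          (r.factorial * Real.Gamma g * Real.Gamma (a * r + b)) := by
        rw [hC]
        simp only
        rw [abs_div, abs_mul, abs_of_pos (Real.Gamma_pos_of_pos (by positivity :
          (0:ℝ) < g + r)), abs_pow, abs_of_pos (by positivity : (0:ℝ) <
          (r.factorial : ℝ) * Real.Gamma g * Real.Gamma (a * r + b))]
      rw [this]
      have hiz : (0:ℝ) < 1 / z := by positivity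
      have e1 : (1 / z : ℝ) ^ (a * r + b) = ((1/z) ^ a) ^ r * (1/z) ^ b := by
        rw [Real.rpow_add hiz, ← Real.rpow_natCast ((1/z) ^ a) r, ← Real.rpow_mul hiz.le]
      have e2 : ((1/z:ℝ) ^ a) = (z ^ a)⁻¹ := by
        rw [one_div, ← Real.rpow_neg_one z, ← Real.rpow_mul hz0.le, mul_comm,
          Real.rpow_mul hz0.le, Real.rpow_neg_one]
      have e3 : |ω| ^ r * ((z ^ a)⁻¹) ^ r = |x| ^ r := by
        rw [hx, abs_div, abs_of_pos hza, div_eq_mul_inv, mul_pow]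
      rw [e1, e2, ← e3]
      field_simp
    rw [funext habs]
    exact (summable_gamma_mul_geom hg (by rwa [abs_abs] : |(|x|)| < 1)).mul_left _
  -- swap integral and sum
  have hswap : ∫ t in Ioi (0:ℝ), (∑' r, F r t) = ∑' r, ∫ t in Ioi (0:ℝ), F r t :=
    (MeasureTheory.integral_tsum_of_summable_integral_norm (fun r => hInt r) hsumnorm).symm
  -- put it together
  rw [setIntegral_congr_fun measurableSet_Ioi hpt, hswap]
  have : ∀ r : ℕ, ∫ t in Ioi (0:ℝ), F r t
      = (1 / z) ^ b * (Real.Gamma (g + r) / (r.factorial * Real.Gamma g) * x ^ r) := by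
    intro r; rw [hval r, hterm r]
  rw [funext this, tsum_mul_left, binomial_tsum g hg hx1]
  -- final algebra
  have h1x : (1:ℝ) - x = (z ^ a - ω) / z ^ a := by
    rw [hx]
    field_simp
  have hsub : (0:ℝ) < z ^ a - ω := by
    have := le_abs_self ω
    linarith
  rw [h1x, Real.rpow_neg (by positivity), Real.div_rpow hsub.le hza.le, one_div,
    Real.inv_rpow hz0.le]
  have e4 : ((z ^ a) : ℝ) ^ g = z ^ (a * g) := (Real.rpow_mul hz0.le a g).symm
  have n1 : z ^ b ≠ 0 := ne_of_gt (Real.rpow_pos_of_pos hz0 b)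
  have n2 : (z ^ a - ω) ^ g ≠ 0 := ne_of_gt (Real.rpow_pos_of_pos hsub g)
  have n3 : z ^ (a * g) ≠ 0 := ne_of_gt (Real.rpow_pos_of_pos hz0 _)
  rw [e4, Real.rpow_sub hz0]
  field_simp
end

section
/- For 0 < α < 1, ν ≥ 0, λ > 0, and t > 0, the convolution identity ∫₀^t y^{α-1} E_{α,α}(-(ν+λx) y^{α}) E_{α}(-(ν+λx)(t-y)^{α}) dy = (t^{α}/α) E_{α,α}(-(ν+λx) t^{α}) holds for every x ≥ 0. -/
open Real MeasureTheory Set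

/-- Two-parameter Mittag-Leffler function `E_{a,b}(t)`. -/
noncomputable def ML2 (a b t : ℝ) : ℝ := ∑' r : ℕ, t ^ r / Real.Gamma (a * r + b)

/-- One-parameter Mittag-Leffler function `E_a(t)`. -/
noncomputable def ML1 (a t : ℝ) : ℝ := ML2 a 1 t

open Filter in
/-- Real scaled Beta integral. -/
lemma real_beta {p q T : ℝ} (hp : 0 < p) (hq : 0 < q) (hT : 0 < T) :
    ∫ y in (0:ℝ)..T, y ^ (p-1) * (T - y) ^ (q-1)
      = Real.Gamma p * Real.Gamma q / Real.Gamma (p+q) * T ^ (p+q-1) := by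
  have hGpq : (0:ℝ) < Real.Gamma (p+q) := Real.Gamma_pos_of_pos (by linarith)
  have h1 : (((∫ y in (0:ℝ)..T, y ^ (p-1) * (T - y) ^ (q-1)) : ℝ) : ℂ)
      = ∫ y in (0:ℝ)..T, (y:ℂ) ^ ((p:ℂ)-1) * ((T:ℂ) - y) ^ ((q:ℂ)-1) := by
    rw [← intervalIntegral.integral_ofReal]
    refine intervalIntegral.integral_congr fun y hy => ?_
    rw [uIcc_of_le hT.le] at hy
    push_cast
    rw [Complex.ofReal_cpow hy.1, Complex.ofReal_cpow (by linarith [hy.2] : (0:ℝ) ≤ T - y)]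
    push_cast
    ring
  have h2 := Complex.betaIntegral_scaled (p:ℂ) (q:ℂ) hT
  have h3 := Complex.Gamma_mul_Gamma_eq_betaIntegral
    (s := (p:ℂ)) (t := (q:ℂ)) (by simpa using hp) (by simpa using hq)
  have hsum : ((p:ℂ)+(q:ℂ)) = ((p+q:ℝ):ℂ) := by push_cast; ring
  have h4 : Complex.betaIntegral (p:ℂ) (q:ℂ)
      = ((Real.Gamma p * Real.Gamma q / Real.Gamma (p+q) : ℝ) : ℂ) := by
    rw [hsum, Complex.Gamma_ofReal, Complex.Gamma_ofReal, Complex.Gamma_ofReal] at h3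
    have hne : ((Real.Gamma (p+q):ℝ):ℂ) ≠ 0 := by exact_mod_cast hGpq.ne'
    push_cast
    field_simp
    linear_combination -h3
  have h5 : ((T ^ (p+q-1) : ℝ) : ℂ) = (T:ℂ) ^ ((p:ℂ) + (q:ℂ) - 1) := by
    rw [Complex.ofReal_cpow hT.le]
    norm_cast
  apply Complex.ofReal_injective
  rw [h1, h2, h4, ← h5]
  push_cast
  ring

lemma Gamma_ratio {a : ℝ} (ha : 0 < a) {y : ℝ} (hy : 2 ≤ y) :
    (y - 1) ^ a * Real.Gamma y ≤ Real.Gamma (y + a) := by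
  have h0 : (0:ℝ) < y - 1 := by linarith
  have hyp : (0:ℝ) < y := by linarith
  have hs := Real.convexOn_log_Gamma.slope_mono_adjacent
    (show y - 1 ∈ Ioi (0:ℝ) from h0) (show y + a ∈ Ioi (0:ℝ) by exact (by linarith : (0:ℝ) < y + a))
    (show y - 1 < y by linarith) (show y < y + a by linarith)
  simp only [Function.comp_apply] at hs
  have hGy : Real.Gamma y = (y - 1) * Real.Gamma (y - 1) := by
    have := Real.Gamma_add_one h0.ne'
    rw [sub_add_cancel] at this
    exact this
  have hlog : Real.log (Real.Gamma y) - Real.log (Real.Gamma (y-1)) = Real.log (y - 1) := by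
    rw [hGy, Real.log_mul h0.ne' (Real.Gamma_pos_of_pos h0).ne']
    ring
  have h1 : (y : ℝ) - (y - 1) = 1 := by ring
  rw [h1, div_one] at hs
  have h2 : y + a - y = a := by ring
  rw [h2, hlog] at hs
  have h3 : a * Real.log (y - 1) + Real.log (Real.Gamma y) ≤ Real.log (Real.Gamma (y + a)) := by
    rw [le_div_iff₀ ha] at hs
    linarith
  have h4 := Real.exp_le_exp.mpr h3
  rw [Real.exp_add, Real.exp_log (Real.Gamma_pos_of_pos hyp),
    Real.exp_log (Real.Gamma_pos_of_pos (by linarith : (0:ℝ) < y + a))] at h4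
  rwa [mul_comm a, Real.exp_mul, Real.exp_log h0] at h4

open Filter in
lemma ML_summable_aux {a b x : ℝ} (ha : 0 < a) (hb : 0 < b) (hx : 0 ≤ x) :
    Summable (fun n : ℕ => ((n:ℝ) + 1) * x ^ n / Real.Gamma (a * n + b)) := by
  rcases eq_or_lt_of_le hx with hx0 | hx
  · refine summable_of_ne_finset_zero (s := {0}) fun n hn => ?_
    have : x ^ n = 0 := by
      rw [← hx0]
      exact zero_pow (by simpa using hn)
    simp [this]
  have htop : Tendsto (fun n : ℕ => a * n + b) atTop atTop :=
    Tendsto.atTop_add (Tendsto.const_mul_atTop ha tendsto_natCast_atTop_atTop) tendsto_const_nhds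
  have hten : Tendsto (fun n : ℕ => (a * n + b - 1) ^ a) atTop atTop :=
    (tendsto_rpow_atTop ha).comp (tendsto_atTop_add_const_right _ _ htop)
  refine summable_of_ratio_norm_eventually_le (r := 1/2) (by norm_num) ?_
  filter_upwards [hten.eventually_ge_atTop (4 * x), htop.eventually_ge_atTop 2] with n h4x h2'
  set y := a * n + b with hydef
  have hΓy : 0 < Real.Gamma y := Real.Gamma_pos_of_pos (by positivity)
  have hΓya : 0 < Real.Gamma (y + a) := Real.Gamma_pos_of_pos (by positivity)
  have hrat : 4 * x * Real.Gamma y ≤ Real.Gamma (y + a) :=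
    (mul_le_mul_of_nonneg_right h4x hΓy.le).trans (Gamma_ratio ha h2')
  have hya : a * ((n + 1 : ℕ) : ℝ) + b = y + a := by push_cast; ring
  rw [hya]
  rw [Real.norm_of_nonneg (by positivity), Real.norm_of_nonneg (by positivity)]
  rw [mul_div_assoc'] at *
  rw [div_le_div_iff₀ hΓya hΓy]
  push_cast
  have hxn : 0 < x ^ n := by positivity
  have key : ((n:ℝ) + 1 + 1) * x ^ (n+1) * Real.Gamma y
      ≤ 1/2 * (((n:ℝ)+1) * x ^ n) * Real.Gamma (y + a) := by
    have e1 : 1/2 * (((n:ℝ)+1) * x ^ n) * (4 * x * Real.Gamma y)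
        ≤ 1/2 * (((n:ℝ)+1) * x ^ n) * Real.Gamma (y + a) :=
      mul_le_mul_of_nonneg_left hrat (by positivity)
    have e2 : ((n:ℝ) + 1 + 1) * x ^ (n+1) * Real.Gamma y
        ≤ 1/2 * (((n:ℝ)+1) * x ^ n) * (4 * x * Real.Gamma y) := by
      rw [pow_succ]
      have hn0 : (0:ℝ) ≤ (n:ℝ) * (x ^ n * x * Real.Gamma y) := by positivity
      nlinarith [hn0]
    linarith
  linear_combination key

lemma ML_summable {a b x : ℝ} (ha : 0 < a) (hb : 0 < b) (hx : 0 ≤ x) :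
    Summable (fun n : ℕ => x ^ n / Real.Gamma (a * n + b)) := by
  refine (ML_summable_aux ha hb hx).of_nonneg_of_le
    (fun n => by positivity) fun n => ?_
  rw [mul_div_assoc]
  exact le_mul_of_one_le_left (by positivity) (by linarith [Nat.cast_nonneg (α := ℝ) n])

lemma tsum_add_pairs {h : ℕ → ℝ} (hs : Summable fun n : ℕ => ((n:ℝ)+1) * |h n|) :
    Summable (fun p : ℕ × ℕ => h (p.1 + p.2)) ∧
      ∑' p : ℕ × ℕ, h (p.1 + p.2) = ∑' n : ℕ, ((n:ℝ)+1) * h n := by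
  classical
  set e := Finset.HasAntidiagonal.sigmaAntidiagonalEquivProd (A := ℕ) with he
  have hcomp : ∀ x : Σ n : ℕ, {p : ℕ × ℕ // p ∈ Finset.HasAntidiagonal.antidiagonal n},
      h ((e x).1 + (e x).2) = h x.1 := by
    rintro ⟨n, ⟨⟨k, l⟩, hkl⟩⟩
    simp [he, Finset.HasAntidiagonal.sigmaAntidiagonalEquivProd, Finset.HasAntidiagonal.mem_antidiagonal.mp hkl]
  have hcard : ∀ (g : ℕ → ℝ) (n : ℕ),
      ∑' _ : {p : ℕ×ℕ // p ∈ Finset.HasAntidiagonal.antidiagonal n}, g n = ((n:ℝ)+1) * g n := by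
    intro g n
    rw [tsum_const, Nat.card_eq_fintype_card, Fintype.card_coe, Finset.Nat.card_antidiagonal,
      nsmul_eq_mul]
    push_cast
    ring
  have habs : Summable fun x : Σ n : ℕ, {p : ℕ × ℕ // p ∈ Finset.HasAntidiagonal.antidiagonal n} => |h x.1| := by
    rw [summable_sigma_of_nonneg (fun _ => abs_nonneg _)]
    refine ⟨fun n => (hasSum_fintype _).summable, ?_⟩
    apply hs.congr
    intro n
    exact (hcard (fun m => |h m|) n).symm
  have hsig : Summable fun x : Σ n : ℕ, {p : ℕ × ℕ // p ∈ Finset.HasAntidiagonal.antidiagonal n} => h x.1 :=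
    habs.of_abs
  have hsum : Summable (fun p : ℕ × ℕ => h (p.1 + p.2)) := by
    rw [← e.summable_iff]
    exact hsig.congr fun x => (hcomp x).symm
  refine ⟨hsum, ?_⟩
  rw [← e.tsum_eq (fun p : ℕ × ℕ => h (p.1 + p.2))]
  calc ∑' x : Σ n : ℕ, {p : ℕ × ℕ // p ∈ Finset.HasAntidiagonal.antidiagonal n}, h ((e x).1 + (e x).2)
      = ∑' x : Σ n : ℕ, {p : ℕ × ℕ // p ∈ Finset.HasAntidiagonal.antidiagonal n}, h x.1 := tsum_congr hcomp
    _ = ∑' (n : ℕ) (_ : {p : ℕ × ℕ // p ∈ Finset.HasAntidiagonal.antidiagonal n}), h n :=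
        Summable.tsum_sigma' (fun n => (hasSum_fintype _).summable) hsig
    _ = ∑' n : ℕ, ((n:ℝ)+1) * h n := tsum_congr (hcard h)

theorem mittagLeffler_convolution
    (a ν lam t : ℝ) (ha : 0 < a) (ha1 : a < 1) (hν : 0 ≤ ν) (hlam : 0 < lam)
    (ht : 0 < t) :
    ∀ x ≥ (0 : ℝ),
      ∫ y in (0 : ℝ)..t,
          y ^ (a - 1) * ML2 a a (-(ν + lam * x) * y ^ a) *
            ML1 a (-(ν + lam * x) * (t - y) ^ a)
        = t ^ a / a * ML2 a a (-(ν + lam * x) * t ^ a) := by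
  intro x hx
  set m : ℝ := ν + lam * x with hm
  have hμ : 0 ≤ m := by positivity
  set c : ℝ := -m with hc
  have habsc : |c| = m := by rw [hc, abs_neg, abs_of_nonneg hμ]
  -- basic positivity of Gamma values
  have hΓ : ∀ u : ℝ, 0 < u → 0 < Real.Gamma u := fun u hu => Real.Gamma_pos_of_pos hu
  -- the coefficient function and integrand family
  set K : ℝ → ℕ × ℕ → ℝ := fun d p =>
    d ^ p.1 / Real.Gamma (a * p.1 + a) * (d ^ p.2 / Real.Gamma (a * p.2 + 1)) with hK
  set F : ℕ × ℕ → ℝ → ℝ := fun p y =>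
    K c p * (y ^ (a * p.1 + a - 1) * (t - y) ^ (a * (p.2:ℝ))) with hF
  set G : ℕ → ℝ := fun n => t ^ (a * n + a) / Real.Gamma (a * n + a + 1) with hG
  have hGnonneg : ∀ n : ℕ, 0 ≤ G n := fun n => by
    have := hΓ (a * n + a + 1) (by positivity)
    positivity
  -- Beta integral evaluation
  have hbeta : ∀ r s : ℕ, ∫ y in (0:ℝ)..t, y ^ (a * (r:ℝ) + a - 1) * (t - y) ^ (a * (s:ℝ))
      = Real.Gamma (a * r + a) * Real.Gamma (a * s + 1) / Real.Gamma (a * ((r+s:ℕ):ℝ) + a + 1)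
        * t ^ (a * ((r+s:ℕ):ℝ) + a) := by
    intro r s
    have h := real_beta (p := a * r + a) (q := a * s + 1) (by positivity) (by positivity) ht
    rw [show a * (s:ℝ) + 1 - 1 = a * (s:ℝ) by ring] at h
    rw [show a * (r:ℝ) + a + (a * (s:ℝ) + 1) = a * ((r+s:ℕ):ℝ) + a + 1 by push_cast; ring] at h
    rw [show a * ((r+s:ℕ):ℝ) + a + 1 - 1 = a * ((r+s:ℕ):ℝ) + a by ring] at h
    exact h
  -- interval integrability of the basic kernels
  have hIIbase : ∀ r s : ℕ, IntervalIntegrable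
      (fun y : ℝ => y ^ (a * (r:ℝ) + a - 1) * (t - y) ^ (a * (s:ℝ))) volume 0 t := by
    intro r s
    have h1 : IntervalIntegrable (fun y : ℝ => y ^ (a * (r:ℝ) + a - 1)) volume 0 t :=
      intervalIntegral.intervalIntegrable_rpow' (by nlinarith [mul_nonneg ha.le (Nat.cast_nonneg (α := ℝ) r)])
    have h2 : Continuous fun y : ℝ => (t - y) ^ (a * (s:ℝ)) :=
      (continuous_const.sub continuous_id).rpow_const fun y => Or.inr (by positivity)
    exact h1.mul_continuousOn h2.continuousOn
  have hII : ∀ p : ℕ × ℕ, IntervalIntegrable (F p) volume 0 t := fun p =>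
    ((hIIbase p.1 p.2).const_mul _)
  -- value of the integral of `K d p * kernel`
  have hval : ∀ (d : ℝ) (p : ℕ × ℕ),
      (∫ y in (0:ℝ)..t, K d p * (y ^ (a * p.1 + a - 1) * (t - y) ^ (a * (p.2:ℝ))))
        = d ^ (p.1 + p.2) * G (p.1 + p.2) := by
    rintro d ⟨r, s⟩
    rw [intervalIntegral.integral_const_mul, hbeta r s]
    have h1 : Real.Gamma (a * r + a) ≠ 0 := (hΓ _ (by positivity)).ne'
    have h2 : Real.Gamma (a * s + 1) ≠ 0 := (hΓ _ (by positivity)).ne'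
    have h3 : Real.Gamma (a * ((r+s:ℕ):ℝ) + a + 1) ≠ 0 := (hΓ _ (by positivity)).ne'
    simp only [hK, hG, pow_add]
    field_simp
  -- absolute value of K c p
  have habsK : ∀ p : ℕ × ℕ, |K c p| = K m p := by
    rintro ⟨r, s⟩
    have h1 : 0 < Real.Gamma (a * r + a) := hΓ _ (by positivity)
    have h2 : 0 < Real.Gamma (a * s + 1) := hΓ _ (by positivity)
    simp only [hK]
    rw [abs_mul, abs_div, abs_div, abs_pow, abs_pow, habsc,
      abs_of_nonneg h1.le, abs_of_nonneg h2.le]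
  -- summability of the dominating series
  set x0 : ℝ := m * t ^ a with hx0
  have hx0nn : 0 ≤ x0 := by positivity
  have hta : ∀ n : ℕ, t ^ (a * (n:ℝ) + a) = (t ^ a) ^ n * t ^ a := by
    intro n
    rw [Real.rpow_add ht, Real.rpow_mul ht.le, Real.rpow_natCast]
  have hdom : Summable fun n : ℕ => ((n:ℝ)+1) * |c ^ n * G n| := by
    have hbase := (ML_summable_aux (b := a + 1) ha (by positivity) hx0nn).mul_left (t ^ a)
    apply hbase.congr
    intro n
    have hΓn : 0 < Real.Gamma (a * n + a + 1) := hΓ _ (by positivity)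
    rw [abs_mul, abs_pow, habsc]
    rw [abs_of_nonneg (hGnonneg n)]
    simp only [hG]
    rw [hta n, hx0, mul_pow, ← Real.rpow_natCast (t ^ a) n]
    rw [show a * (n:ℝ) + (a + 1) = a * (n:ℝ) + a + 1 by ring]
    field_simp
  have hdm : Summable fun n : ℕ => ((n:ℝ)+1) * |m ^ n * G n| := by
    apply hdom.congr
    intro n
    rw [abs_mul, abs_mul, abs_pow, abs_pow, habsc, abs_of_nonneg hμ]
  obtain ⟨hsum_pairs_m, htsum_pairs_m⟩ := tsum_add_pairs hdm
  obtain ⟨hsum_pairs_c, htsum_pairs_c⟩ := tsum_add_pairs hdom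
  -- pointwise expansion of the integrand on `Ioo 0 t`
  have hpt : ∀ y ∈ Ioo (0:ℝ) t,
      y ^ (a - 1) * ML2 a a (c * y ^ a) * ML1 a (c * (t - y) ^ a) = ∑' p : ℕ × ℕ, F p y := by
    intro y hy
    obtain ⟨hy0, hyt⟩ := hy
    have hty : 0 < t - y := by linarith
    have hs1 : Summable fun r : ℕ => ‖(c * y ^ a) ^ r / Real.Gamma (a * r + a)‖ := by
      apply (ML_summable (b := a) (x := m * y ^ a) ha ha (by positivity)).congr
      intro r
      have := hΓ (a * r + a) (by positivity)
      rw [Real.norm_eq_abs, abs_div, abs_pow, abs_mul, habsc,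
        abs_of_nonneg (Real.rpow_nonneg hy0.le a), abs_of_nonneg this.le]
    have hs2 : Summable fun s : ℕ => ‖(c * (t - y) ^ a) ^ s / Real.Gamma (a * s + 1)‖ := by
      apply (ML_summable (b := 1) (x := m * (t - y) ^ a) ha one_pos (by positivity)).congr
      intro s
      have := hΓ (a * s + 1) (by positivity)
      rw [Real.norm_eq_abs, abs_div, abs_pow, abs_mul, habsc,
        abs_of_nonneg (Real.rpow_nonneg hty.le a), abs_of_nonneg this.le]
    have hprod : ML2 a a (c * y ^ a) * ML1 a (c * (t - y) ^ a)
        = ∑' p : ℕ × ℕ, ((c * y ^ a) ^ p.1 / Real.Gamma (a * p.1 + a))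
            * ((c * (t - y) ^ a) ^ p.2 / Real.Gamma (a * p.2 + 1)) := by
      rw [ML1, ML2, ML2]
      exact tsum_mul_tsum_of_summable_norm hs1 hs2
    rw [mul_assoc, hprod, ← tsum_mul_left]
    apply tsum_congr
    rintro ⟨r, s⟩
    simp only [hF, hK]
    rw [mul_pow, mul_pow]
    rw [← Real.rpow_natCast (y ^ a) r, ← Real.rpow_mul hy0.le, ← Real.rpow_natCast ((t - y) ^ a) s,
      ← Real.rpow_mul hty.le]
    rw [show (a * (r:ℝ) + a - 1) = (a - 1) + a * (r:ℝ) by ring, Real.rpow_add hy0]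
    ring
  -- the main computation
  have hmain : (∫ y in (0:ℝ)..t,
        y ^ (a - 1) * ML2 a a (c * y ^ a) * ML1 a (c * (t - y) ^ a))
      = ∑' n : ℕ, ((n:ℝ)+1) * (c ^ n * G n) := by
    rw [intervalIntegral.integral_of_le ht.le, integral_Ioc_eq_integral_Ioo]
    rw [setIntegral_congr_fun measurableSet_Ioo hpt]
    have hmeas : ∀ p : ℕ × ℕ, AEStronglyMeasurable (F p) (volume.restrict (Ioo 0 t)) := by
      intro p
      have hco : ContinuousOn (fun y : ℝ => y ^ (a * p.1 + a - 1)) (Ioo 0 t) := fun y hy =>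
        ((Real.continuousAt_rpow_const y _ (Or.inl (ne_of_gt hy.1)))).continuousWithinAt
      have h2 : Continuous fun y : ℝ => (t - y) ^ (a * (p.2:ℝ)) :=
        (continuous_const.sub continuous_id).rpow_const fun y => Or.inr (by positivity)
      exact ((continuousOn_const.mul (hco.mul h2.continuousOn)).aestronglyMeasurable
        measurableSet_Ioo)
    have hFint : ∀ p : ℕ × ℕ, IntegrableOn (F p) (Ioo 0 t) volume :=
      fun p => ((hII p).1).mono_set Ioo_subset_Ioc_self
    have hnorm_int : ∀ p : ℕ × ℕ, (∫ y in Ioo (0:ℝ) t, ‖F p y‖) = m ^ (p.1 + p.2) * G (p.1 + p.2) := by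
      intro p
      have : ∀ y ∈ Ioo (0:ℝ) t, ‖F p y‖
          = K m p * (y ^ (a * p.1 + a - 1) * (t - y) ^ (a * (p.2:ℝ))) := by
        intro y hy
        have hy0 := hy.1
        have hty : 0 < t - y := by linarith [hy.2]
        rw [Real.norm_eq_abs, hF]
        rw [abs_mul, habsK p, abs_mul,
          abs_of_nonneg (Real.rpow_nonneg hy0.le _), abs_of_nonneg (Real.rpow_nonneg hty.le _)]
      rw [setIntegral_congr_fun measurableSet_Ioo this, ← integral_Ioc_eq_integral_Ioo,
        ← intervalIntegral.integral_of_le ht.le, hval m p]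
    rw [integral_tsum hmeas ?_]
    · rw [tsum_congr (fun p : ℕ × ℕ => ?_), htsum_pairs_c]
      rw [← integral_Ioc_eq_integral_Ioo, ← intervalIntegral.integral_of_le ht.le]
      exact hval c p
    · have heach : ∀ p : ℕ × ℕ, ∫⁻ y in Ioo (0:ℝ) t, ‖F p y‖ₑ
          = ENNReal.ofReal (m ^ (p.1 + p.2) * G (p.1 + p.2)) := by
        intro p
        rw [← ofReal_integral_norm_eq_lintegral_enorm (hFint p), hnorm_int p]
      rw [tsum_congr heach]
      rw [← ENNReal.ofReal_tsum_of_nonneg (fun p => mul_nonneg (pow_nonneg hμ _) (hGnonneg _)) hsum_pairs_m]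
      exact ENNReal.ofReal_ne_top
  -- finish: evaluate the single series
  have hfinal : ∑' n : ℕ, ((n:ℝ)+1) * (c ^ n * G n) = t ^ a / a * ML2 a a (c * t ^ a) := by
    rw [ML2, ← tsum_mul_left]
    apply tsum_congr
    intro n
    have hne : a * (n:ℝ) + a ≠ 0 := by positivity
    have hΓn : Real.Gamma (a * n + a) ≠ 0 := (hΓ _ (by positivity)).ne'
    simp only [hG]
    rw [Real.Gamma_add_one hne, hta n, mul_pow, ← Real.rpow_natCast (t ^ a) n]
    field_simp
  calc (∫ y in (0:ℝ)..t, y ^ (a - 1) * ML2 a a (-(ν + lam * x) * y ^ a)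
        * ML1 a (-(ν + lam * x) * (t - y) ^ a))
      = ∫ y in (0:ℝ)..t, y ^ (a - 1) * ML2 a a (c * y ^ a) * ML1 a (c * (t - y) ^ a) := by
        rw [hc, hm]
    _ = ∑' n : ℕ, ((n:ℝ)+1) * (c ^ n * G n) := hmain
    _ = t ^ a / a * ML2 a a (c * t ^ a) := hfinal
    _ = t ^ a / a * ML2 a a (-(ν + lam * x) * t ^ a) := by rw [hc, hm]
end

section
/- For ρ, μ, ν, γ > 0, ω ∈ ℝ and x > 0, ∫₀^x u^{μ-1} E_{ρ,μ}^{γ}(ω u^{ρ}) (x-u)^{ν-1} du = Γ(ν) x^{μ+ν-1} E_{ρ,μ+ν}^{γ}(ω x^{ρ}). -/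
open Real MeasureTheory Set
open Filter

lemma fact_add_le (r m : ℕ) : (r + m).factorial ≤ (r + m) ^ m * r.factorial := by
  induction m with
  | zero => simp
  | succ m ih =>
    have h1 : r + (m + 1) = (r + m) + 1 := by ring
    rw [h1, Nat.factorial_succ, pow_succ]
    calc (r + m + 1) * (r + m).factorial
        ≤ (r + m + 1) * ((r + m) ^ m * r.factorial) := Nat.mul_le_mul_left _ ih
      _ ≤ (r + m + 1) ^ m * (r + m + 1) * r.factorial := by
          rw [Nat.mul_comm (r + m + 1), Nat.mul_assoc, Nat.mul_comm r.factorial,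
            ← Nat.mul_assoc]
          exact Nat.mul_le_mul_right _ (Nat.mul_le_mul_right _
            (Nat.pow_le_pow_left (Nat.le_succ _) _))

lemma real_beta_s2 {a b x : ℝ} (ha : 0 < a) (hb : 0 < b) (hx : 0 < x) :
    ∫ u in (0:ℝ)..x, u ^ (a - 1) * (x - u) ^ (b - 1)
      = Real.Gamma a * Real.Gamma b / Real.Gamma (a + b) * x ^ (a + b - 1) := by
  have h1 := Complex.betaIntegral_scaled (a:ℂ) (b:ℂ) hx
  have h2 : Complex.Gamma a * Complex.Gamma b
      = Complex.Gamma (a+b) * Complex.betaIntegral a b :=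
    Complex.Gamma_mul_Gamma_eq_betaIntegral (by simpa using ha) (by simpa using hb)
  have h3 : (∫ u in (0:ℝ)..x, ((u:ℂ)) ^ ((a:ℂ) - 1) * ((x:ℂ) - u) ^ ((b:ℂ) - 1))
      = ((∫ u in (0:ℝ)..x, u ^ (a - 1) * (x - u) ^ (b - 1) : ℝ) : ℂ) := by
    rw [← intervalIntegral.integral_ofReal]
    refine intervalIntegral.integral_congr fun u hu => ?_
    rw [Set.uIcc_of_le hx.le] at hu
    push_cast
    rw [Complex.ofReal_cpow hu.1, Complex.ofReal_cpow (by linarith [hu.2] : (0:ℝ) ≤ x - u)]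
    push_cast
    ring
  have hab : Complex.Gamma ((a:ℂ)+b) ≠ 0 := by
    rw [show ((a:ℂ)+b) = ((a+b:ℝ):ℂ) by push_cast; ring, Complex.Gamma_ofReal]
    exact_mod_cast (Real.Gamma_pos_of_pos (by linarith)).ne'
  have hβ : Complex.betaIntegral a b
      = Complex.Gamma a * Complex.Gamma b / Complex.Gamma ((a:ℂ)+b) := by
    rw [eq_div_iff hab, h2]; ring
  rw [h3, hβ] at h1
  have := congrArg Complex.re h1
  rw [Complex.ofReal_re] at this
  rw [this]
  have e1 : ((x:ℂ)) ^ ((a:ℂ) + b - 1) = ((x ^ (a + b - 1) : ℝ) : ℂ) := by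
    rw [Complex.ofReal_cpow hx.le]; push_cast; ring_nf
  have e2 : Complex.Gamma ↑a * Complex.Gamma ↑b / Complex.Gamma ((a:ℂ) + ↑b)
      = ((Real.Gamma a * Real.Gamma b / Real.Gamma (a+b) : ℝ) : ℂ) := by
    rw [show ((a:ℂ)+b) = ((a+b:ℝ):ℂ) by push_cast; ring, Complex.Gamma_ofReal,
      Complex.Gamma_ofReal, Complex.Gamma_ofReal]
    push_cast
    ring
  rw [e1, e2, ← Complex.ofReal_mul, Complex.ofReal_re]
  ring

lemma beta_intervalIntegrable {a b x : ℝ} (ha : 0 < a) (hb : 0 < b) (hx : 0 < x) :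
    IntervalIntegrable (fun u => u ^ (a - 1) * (x - u) ^ (b - 1)) volume 0 x := by
  have half : ∀ a b : ℝ, 0 < a → 0 < b →
      IntervalIntegrable (fun u => u ^ (a - 1) * (x - u) ^ (b - 1)) volume 0 (x/2) := by
    intro a b ha hb
    apply IntervalIntegrable.mul_continuousOn
    · exact intervalIntegral.intervalIntegrable_rpow' (by linarith)
    · apply ContinuousOn.rpow_const (by fun_prop)
      intro u hu
      rw [Set.uIcc_of_le (by linarith)] at hu
      exact Or.inl (by simp only [mem_Icc] at hu; intro h; nlinarith [hu.2])
  have hL := half a b ha hb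
  have hR0 := half b a hb ha
  have hR := hR0.comp_sub_left x
  simp only [sub_sub_cancel] at hR
  rw [show x - x/2 = x/2 by ring, show x - 0 = x by ring] at hR
  have hR' : IntervalIntegrable (fun u => u ^ (a - 1) * (x - u) ^ (b - 1)) volume (x/2) x := by
    apply hR.symm.congr
    intro u _
    exact mul_comm _ _
  exact hL.trans hR'

lemma summable_ML (a b g t : ℝ) (ha : 0 < a) (hb : 0 < b) (hg : 0 < g) :
    Summable (fun r : ℕ => Real.Gamma (g + r) * t ^ r /
      ((r.factorial : ℝ) * Real.Gamma g * Real.Gamma (a * r + b))) := by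
  have hMpos : (0:ℝ) < 2 * |t| + 1 := by linarith [abs_nonneg t]
  have habs : |t| < 2 * |t| + 1 := by linarith [abs_nonneg t]
  have hΓg : 0 < Real.Gamma g := Real.Gamma_pos_of_pos hg
  set m : ℕ := ⌈g⌉₊ with hm
  set M : ℝ := (2 * |t| + 1) ^ (2 / a) with hMdef
  set q : ℝ := |t| / (2 * |t| + 1) with hq
  have hM0 : (0:ℝ) < M := Real.rpow_pos_of_pos hMpos _
  have hM1 : (1:ℝ) ≤ M := Real.one_le_rpow (by linarith [abs_nonneg t]) (by positivity)
  have hMa : M ^ (a / 2) = 2 * |t| + 1 := by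
    rw [hMdef, ← Real.rpow_mul hMpos.le]
    rw [show 2 / a * (a / 2) = 1 by field_simp, Real.rpow_one]
  set k : ℕ → ℕ := fun r => ⌊a * r + b⌋₊ - 1 with hk
  -- k tends to infinity
  have h0 : Tendsto (fun r : ℕ => a * r + b) atTop atTop :=
    tendsto_atTop_add_const_right _ b (tendsto_natCast_atTop_atTop.const_mul_atTop ha)
  have hkT : Tendsto k atTop atTop :=
    (tendsto_sub_atTop_nat 1).comp (tendsto_nat_floor_atTop.comp h0)
  have hfac : ∀ᶠ n : ℕ in atTop, M ^ n ≤ (n.factorial : ℝ) := by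
    filter_upwards [(FloorSemiring.tendsto_pow_div_factorial_atTop M).eventually
      (gt_mem_nhds one_pos)] with n hn
    have hfp : (0:ℝ) < n.factorial := by positivity
    rw [div_lt_one hfp] at hn
    exact hn.le
  -- the summable majorant
  have hq1 : ‖q‖ < 1 := by
    rw [Real.norm_eq_abs, abs_of_nonneg (by positivity), hq, div_lt_one hMpos]
    exact habs
  have hG : Summable (fun r : ℕ => (2 ^ m / Real.Gamma g) * ((r:ℝ) ^ m * q ^ r)) :=
    (summable_pow_mul_geometric_of_norm_lt_one m hq1).mul_left _
  apply Summable.of_norm_bounded_eventually_nat hG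
  filter_upwards [eventually_ge_atTop m, eventually_ge_atTop 2,
    hkT.eventually (eventually_ge_atTop 1), hkT.eventually hfac,
    ((tendsto_natCast_atTop_atTop.const_mul_atTop ha).atTop_div_const
      two_pos).eventually_ge_atTop (2 - b)] with r hc1 hc2 hc3 hc4 hc5
  set y : ℝ := a * r + b with hy
  have hy0 : 0 < y := by positivity
  have hΓgr : 0 < Real.Gamma (g + r) := Real.Gamma_pos_of_pos (by positivity)
  have hΓy : 0 < Real.Gamma y := Real.Gamma_pos_of_pos hy0
  have hfp : (0:ℝ) < (r.factorial : ℝ) := by positivity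
  have hr2 : (2:ℝ) ≤ g + r := by
    have : (2:ℝ) ≤ (r:ℝ) := by exact_mod_cast hc2
    linarith
  -- Step A : Gamma (g+r) ≤ (r+m)!
  have hA : Real.Gamma (g + r) ≤ ((r + m).factorial : ℝ) := by
    have hle : g + r ≤ ((r + m : ℕ) : ℝ) + 1 := by
      push_cast
      have := Nat.le_ceil g
      rw [← hm] at this
      linarith
    have h2' : ((r + m : ℕ) : ℝ) + 1 ∈ Ici (2:ℝ) := by
      simp only [mem_Ici]; push_cast
      have : (2:ℝ) ≤ (r:ℝ) := by exact_mod_cast hc2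
      linarith
    calc Real.Gamma (g + r) ≤ Real.Gamma (((r + m : ℕ) : ℝ) + 1) :=
          Real.Gamma_strictMonoOn_Ici.monotoneOn (mem_Ici.mpr hr2) h2' hle
      _ = ((r + m).factorial : ℝ) := Real.Gamma_nat_eq_factorial _
  -- Step A' : (r+m)! ≤ (2r)^m * r!
  have hA' : ((r + m).factorial : ℝ) ≤ (2 * (r:ℝ)) ^ m * (r.factorial : ℝ) := by
    have hnat : (r + m).factorial ≤ (2 * r) ^ m * r.factorial :=
      le_trans (fact_add_le r m)
        (Nat.mul_le_mul_right _ (Nat.pow_le_pow_left (by omega) _))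
    exact_mod_cast hnat
  -- Step C : (k r)! ≤ Gamma y
  have hfl1 : 1 ≤ ⌊y⌋₊ := by
    have h' : 1 ≤ ⌊a * (r:ℝ) + b⌋₊ - 1 := hc3
    show 1 ≤ ⌊a * (r:ℝ) + b⌋₊
    omega
  have hkcast : ((k r : ℕ) : ℝ) = (⌊y⌋₊ : ℝ) - 1 := by
    simp only [hk]
    push_cast [Nat.cast_sub (show 1 ≤ ⌊a * (r:ℝ) + b⌋₊ from hfl1)]
    ring
  have hkc1 : ((k r : ℕ) : ℝ) + 1 ≤ y := by
    rw [hkcast]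
    have := Nat.floor_le hy0.le
    linarith
  have hkge : a * (r:ℝ) / 2 ≤ ((k r : ℕ) : ℝ) := by
    rw [hkcast]
    have h1 : y - 1 < (⌊y⌋₊ : ℝ) := Nat.sub_one_lt_floor y
    have h2 : 2 - b ≤ a * (r:ℝ) / 2 := hc5
    simp only [hy] at h1 ⊢
    linarith
  have hC : ((k r).factorial : ℝ) ≤ Real.Gamma y := by
    have hm1 : (2:ℝ) ≤ ((k r : ℕ) : ℝ) + 1 := by
      have : (1:ℝ) ≤ ((k r : ℕ) : ℝ) := by exact_mod_cast hc3
      linarith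
    calc ((k r).factorial : ℝ) = Real.Gamma (((k r : ℕ) : ℝ) + 1) :=
          (Real.Gamma_nat_eq_factorial _).symm
      _ ≤ Real.Gamma y :=
          Real.Gamma_strictMonoOn_Ici.monotoneOn (mem_Ici.mpr hm1)
            (mem_Ici.mpr (by linarith)) hkc1
  -- Step D : (2|t|+1)^r ≤ (k r)!
  have hD : (2 * |t| + 1) ^ r ≤ ((k r).factorial : ℝ) := by
    have e1 : (2 * |t| + 1) ^ r = M ^ (a / 2 * r) := by
      rw [← hMa, ← Real.rpow_natCast (M ^ (a/2)) r, ← Real.rpow_mul hM0.le]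
    rw [e1]
    calc M ^ (a / 2 * r) ≤ M ^ (((k r : ℕ) : ℝ)) :=
          Real.rpow_le_rpow_of_exponent_le hM1 (by rw [mul_comm (a/2)]; linarith [hkge])
      _ = M ^ (k r : ℕ) := by rw [Real.rpow_natCast]
      _ ≤ ((k r).factorial : ℝ) := hc4
  -- put it together
  have hnorm : ‖Real.Gamma (g + r) * t ^ r /
      ((r.factorial : ℝ) * Real.Gamma g * Real.Gamma (a * r + b))‖
      = Real.Gamma (g + r) * |t| ^ r /
        ((r.factorial : ℝ) * Real.Gamma g * Real.Gamma (a * r + b)) := by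
    rw [Real.norm_eq_abs, abs_div, abs_mul, abs_pow, abs_of_pos hΓgr,
      abs_of_pos (mul_pos (mul_pos hfp hΓg) hΓy)]
  rw [hnorm]
  have key : Real.Gamma (g + r) * |t| ^ r /
      ((r.factorial : ℝ) * Real.Gamma g * Real.Gamma (a * r + b))
      ≤ ((r.factorial : ℝ) * (2 * (r:ℝ)) ^ m * |t| ^ r) /
        ((r.factorial : ℝ) * Real.Gamma g * (2 * |t| + 1) ^ r) := by
    apply div_le_div₀ (by positivity)
    · exact mul_le_mul_of_nonneg_right (hA.trans hA')
        (by positivity) |>.trans_eq (by ring)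
    · positivity
    · exact mul_le_mul_of_nonneg_left (hD.trans hC) (by positivity)
  refine key.trans (le_of_eq ?_)
  rw [hq, mul_pow 2 (r:ℝ), div_pow]
  field_simp

theorem mittagLeffler3_fractional_integral
    (ρ μ ν γ ω x : ℝ) (hρ : 0 < ρ) (hμ : 0 < μ) (hν : 0 < ν) (hγ : 0 < γ)
    (hx : 0 < x) :
    ∫ u in (0 : ℝ)..x, u ^ (μ - 1) * ML3 ρ μ γ (ω * u ^ ρ) * (x - u) ^ (ν - 1)
      = Real.Gamma ν * x ^ (μ + ν - 1) * ML3 ρ (μ + ν) γ (ω * x ^ ρ) := by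
  have hΓγ : 0 < Real.Gamma γ := Real.Gamma_pos_of_pos hγ
  have hΓν : 0 < Real.Gamma ν := Real.Gamma_pos_of_pos hν
  have hbpos : ∀ r : ℕ, 0 < ρ * r + μ := fun r => by positivity
  have hΓb : ∀ r : ℕ, 0 < Real.Gamma (ρ * r + μ) :=
    fun r => Real.Gamma_pos_of_pos (hbpos r)
  have hΓbν : ∀ r : ℕ, 0 < Real.Gamma (ρ * r + μ + ν) :=
    fun r => Real.Gamma_pos_of_pos (by have := hbpos r; linarith)
  have hΓγr : ∀ r : ℕ, 0 < Real.Gamma (γ + r) :=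
    fun r => Real.Gamma_pos_of_pos (by positivity)
  have hfp : ∀ r : ℕ, (0:ℝ) < (r.factorial : ℝ) := fun r => by positivity
  set F : ℕ → ℝ → ℝ := fun r u =>
    (Real.Gamma (γ + r) * ω ^ r /
      ((r.factorial : ℝ) * Real.Gamma γ * Real.Gamma (ρ * r + μ)))
      * (u ^ (ρ * r + μ - 1) * (x - u) ^ (ν - 1)) with hF
  have hxρ : 0 < x ^ ρ := Real.rpow_pos_of_pos hx ρ
  -- integrability of each term
  have hFint : ∀ r : ℕ, IntegrableOn (F r) (Ioc 0 x) volume := fun r =>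
    ((beta_intervalIntegrable (hbpos r) hν hx).1).const_mul _
  -- power splitting
  have hxsplit : x ^ (ρ * (0:ℕ) + μ + ν - 1) = 0 → True := fun _ => trivial
  have e2 : ∀ r : ℕ, x ^ (ρ * r + μ + ν - 1) = (x ^ ρ) ^ r * x ^ (μ + ν - 1) := by
    intro r
    rw [show ρ * r + μ + ν - 1 = ρ * r + (μ + ν - 1) by ring, Real.rpow_add hx,
      Real.rpow_mul hx.le, Real.rpow_natCast]
  -- value of each integral
  have hFval : ∀ r : ℕ, (∫ u in Ioc (0:ℝ) x, F r u)
      = (Real.Gamma (γ + r) * ω ^ r /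
          ((r.factorial : ℝ) * Real.Gamma γ * Real.Gamma (ρ * r + μ)))
        * (Real.Gamma (ρ * r + μ) * Real.Gamma ν / Real.Gamma (ρ * r + μ + ν)
            * x ^ (ρ * r + μ + ν - 1)) := by
    intro r
    simp only [hF]
    rw [MeasureTheory.integral_const_mul]
    congr 1
    rw [← intervalIntegral.integral_of_le hx.le]
    exact real_beta_s2 (hbpos r) hν hx
  -- norm integrals
  have hFnorm : ∀ r : ℕ, (∫ u in Ioc (0:ℝ) x, ‖F r u‖)
      = (Real.Gamma ν * x ^ (μ + ν - 1)) *
        (Real.Gamma (γ + r) * |ω * x ^ ρ| ^ r /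
          ((r.factorial : ℝ) * Real.Gamma γ * Real.Gamma (ρ * r + (μ + ν)))) := by
    intro r
    have h1 : EqOn (fun u => ‖F r u‖)
        (fun u => |Real.Gamma (γ + r) * ω ^ r /
          ((r.factorial : ℝ) * Real.Gamma γ * Real.Gamma (ρ * r + μ))|
          * (u ^ (ρ * r + μ - 1) * (x - u) ^ (ν - 1))) (Ioc (0:ℝ) x) := by
      intro u hu
      have h2 : (0:ℝ) ≤ x - u := by linarith [hu.2]
      simp only [hF, Real.norm_eq_abs, abs_mul]
      rw [abs_of_nonneg (Real.rpow_nonneg hu.1.le _),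
        abs_of_nonneg (Real.rpow_nonneg h2 _)]
    rw [setIntegral_congr_fun measurableSet_Ioc h1, MeasureTheory.integral_const_mul,
      ← intervalIntegral.integral_of_le hx.le, real_beta_s2 (hbpos r) hν hx]
    have e1 : |Real.Gamma (γ + r) * ω ^ r /
        ((r.factorial : ℝ) * Real.Gamma γ * Real.Gamma (ρ * r + μ))|
        = Real.Gamma (γ + r) * |ω| ^ r /
          ((r.factorial : ℝ) * Real.Gamma γ * Real.Gamma (ρ * r + μ)) := by
      rw [abs_div, abs_mul, abs_pow, abs_of_pos (hΓγr r),
        abs_of_pos (mul_pos (mul_pos (hfp r) hΓγ) (hΓb r))]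
    have e3 : |ω * x ^ ρ| ^ r = |ω| ^ r * (x ^ ρ) ^ r := by
      rw [abs_mul, mul_pow, abs_of_pos hxρ]
    rw [e1, e2 r, e3, show ρ * (r:ℝ) + (μ + ν) = ρ * r + μ + ν by ring]
    field_simp
  -- summability of norm integrals
  have hFsum : Summable (fun r : ℕ => ∫ u in Ioc (0:ℝ) x, ‖F r u‖) := by
    have := (summable_ML ρ (μ + ν) γ |ω * x ^ ρ| hρ (by linarith) hγ).mul_left
      (Real.Gamma ν * x ^ (μ + ν - 1))
    exact (funext hFnorm : (fun r : ℕ => ∫ u in Ioc (0:ℝ) x, ‖F r u‖) = _) ▸ this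
  -- interchange of sum and integral
  have hswap := MeasureTheory.integral_tsum_of_summable_integral_norm
    (μ := volume.restrict (Ioc (0:ℝ) x)) hFint hFsum
  -- pointwise identification of the integrand with the series
  have hptw : EqOn (fun u => u ^ (μ - 1) * ML3 ρ μ γ (ω * u ^ ρ) * (x - u) ^ (ν - 1))
      (fun u => ∑' r : ℕ, F r u) (Ioc (0:ℝ) x) := by
    intro u hu
    have hu0 : 0 < u := hu.1
    simp only [ML3, hF]
    rw [← tsum_mul_left, ← tsum_mul_right]
    refine tsum_congr fun r => ?_
    rw [show ρ * (r:ℝ) + μ - 1 = ρ * r + (μ - 1) by ring, Real.rpow_add hu0,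
      Real.rpow_mul hu0.le, Real.rpow_natCast, mul_pow]
    ring
  rw [intervalIntegral.integral_of_le hx.le,
    setIntegral_congr_fun measurableSet_Ioc hptw, ← hswap]
  -- evaluate the sum of integrals
  rw [ML3, ← tsum_mul_left]
  refine tsum_congr fun r => ?_
  rw [hFval r, e2 r, mul_pow, show ρ * (r:ℝ) + (μ + ν) = ρ * r + μ + ν by ring]
  have h4 : x ^ ρ ≠ 0 := hxρ.ne'
  field_simp
end

section
/- Let λ ≠ μ be positive reals, ν ≥ 0, 0 < α < 1. The solution of the Caputo fractional initial value problem (d^α/dt^α) u(t) = (2λ-2μ-ν) u(t) + 2λ E_α((λ-μ-ν) t^α), u(0) = 0, is u(t) = (2λ/(λ-μ)) [E_α((2λ-2μ-ν) t^α) - E_α((λ-μ-ν) t^α)]. -/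
open Real MeasureTheory Set

/-- Caputo fractional derivative of order `a ∈ (0,1)`. -/
noncomputable def caputo (a : ℝ) (g : ℝ → ℝ) (t : ℝ) : ℝ :=
  (1 / Real.Gamma (1 - a)) * ∫ y in (0 : ℝ)..t, (t - y) ^ (-a) * deriv g y

open Filter in
theorem gamma_ratio (x aa : ℝ) (hx : 0 < x) (h0 : 0 < aa) (h1 : aa ≤ 1) :
    Real.Gamma (x + 1) ≤ Real.Gamma (x + aa) * (x + aa) ^ (1 - aa) := by
  have hxa : 0 < x + aa := by linarith
  have hxa1 : 0 < x + aa + 1 := by linarith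
  have key := Real.convexOn_log_Gamma.2 (mem_Ioi.2 hxa) (mem_Ioi.2 hxa1)
    h0.le (by linarith : (0:ℝ) ≤ 1 - aa) (by ring)
  have hsm : aa • (x + aa) + (1 - aa) • (x + aa + 1) = x + 1 := by
    simp [smul_eq_mul]; ring
  rw [hsm] at key
  have hG1 : Real.Gamma (x + aa + 1) = (x + aa) * Real.Gamma (x + aa) :=
    Real.Gamma_add_one hxa.ne'
  simp only [Function.comp_apply, smul_eq_mul] at key
  rw [hG1, Real.log_mul hxa.ne' (Real.Gamma_pos_of_pos hxa).ne'] at key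
  have : Real.log (Real.Gamma (x + 1)) ≤
      Real.log (Real.Gamma (x + aa) * (x + aa) ^ (1 - aa)) := by
    rw [Real.log_mul (Real.Gamma_pos_of_pos hxa).ne' (Real.rpow_pos_of_pos hxa _).ne',
      Real.log_rpow hxa]
    nlinarith [key]
  have hL := Real.exp_le_exp.2 this
  rwa [Real.exp_log (Real.Gamma_pos_of_pos (by linarith)),
    Real.exp_log (mul_pos (Real.Gamma_pos_of_pos hxa) (Real.rpow_pos_of_pos hxa _))] at hL


open Filter in
theorem summable_aux (a b x : ℝ) (ha : 0 < a) (ha1 : a ≤ 1) (hb : 0 < b) (hx : 0 ≤ x) :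
    Summable (fun r : ℕ => ((r : ℝ) + 1) * x ^ r / Real.Gamma (a * r + b)) := by
  set M : ℝ := (8 * (x + 1)) ^ (1 / a) with hM
  have hM0 : 0 < M := Real.rpow_pos_of_pos (by linarith) _
  obtain ⟨N, hN⟩ := exists_nat_gt ((max a M - b) / a)
  apply summable_of_ratio_norm_eventually_le (r := 1/2) (by norm_num)
  filter_upwards [eventually_atTop.2 ⟨N, fun n hn => hn⟩] with n hn
  set X : ℝ := a * n + b with hX
  have hnN : (N : ℝ) ≤ n := Nat.cast_le.2 hn
  have hXge : max a M ≤ X := by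
    have : (max a M - b) / a < N := hN
    have : max a M - b < a * N := by
      rw [div_lt_iff₀ ha] at this; linarith
    have : a * N ≤ a * n := by nlinarith
    simp only [hX]; nlinarith [le_max_left a M, le_max_right a M]
  have hXa : a ≤ X := le_trans (le_max_left _ _) hXge
  have hXM : M ≤ X := le_trans (le_max_right _ _) hXge
  have hX0 : 0 < X := lt_of_lt_of_le ha hXa
  have hGX : 0 < Real.Gamma X := Real.Gamma_pos_of_pos hX0
  have hGXa : 0 < Real.Gamma (X + a) := Real.Gamma_pos_of_pos (by linarith)
  -- Gamma ratio bound : Γ X / Γ (X+a) ≤ (X+a)^(1-a)/X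
  have hgr : Real.Gamma X * X ≤ Real.Gamma (X + a) * (X + a) ^ (1 - a) := by
    have := gamma_ratio X a hX0 ha ha1
    rwa [Real.Gamma_add_one hX0.ne', mul_comm X] at this
  -- (X+a)^(1-a) ≤ 2 * X^(1-a)
  have h2 : (X + a) ^ (1 - a) ≤ 2 * X ^ (1 - a) := by
    calc (X + a) ^ (1 - a) ≤ (2 * X) ^ (1 - a) :=
          Real.rpow_le_rpow (by linarith) (by linarith) (by linarith)
      _ = 2 ^ (1 - a) * X ^ (1 - a) := Real.mul_rpow (by norm_num) hX0.le
      _ ≤ 2 * X ^ (1 - a) := by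
          gcongr
          calc (2:ℝ) ^ (1 - a) ≤ 2 ^ (1:ℝ) :=
                Real.rpow_le_rpow_of_exponent_le (by norm_num) (by linarith)
            _ = 2 := Real.rpow_one 2
  -- X^a ≥ 8(x+1)
  have hXpow : 8 * (x + 1) ≤ X ^ a := by
    have h := Real.rpow_le_rpow hM0.le hXM ha.le
    rw [hM, ← Real.rpow_mul (by linarith : (0:ℝ) ≤ 8 * (x+1)),
      one_div_mul_cancel ha.ne', Real.rpow_one] at h
    exact h
  -- core inequality
  have hXsplit : X ^ (1 - a) * X ^ a = X := by
    rw [← Real.rpow_add hX0]; norm_num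
  have hn0 : (0:ℝ) ≤ (n:ℝ) := Nat.cast_nonneg n
  have key : ((n:ℝ) + 2) * x * Real.Gamma X ≤ (1/2) * ((n:ℝ)+1) * Real.Gamma (X + a) := by
    have hP : 0 < X ^ (1 - a) := Real.rpow_pos_of_pos hX0 _
    have hQ : 0 < X ^ a := Real.rpow_pos_of_pos hX0 _
    have hGb : Real.Gamma X * X ≤ 2 * Real.Gamma (X + a) * X ^ (1 - a) := by
      nlinarith [hgr, mul_le_mul_of_nonneg_left h2 hGXa.le]
    have h1 : ((n:ℝ) + 2) * x * Real.Gamma X * X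
        ≤ ((n:ℝ) + 2) * x * (2 * Real.Gamma (X + a) * X ^ (1 - a)) := by
      have hnx : (0:ℝ) ≤ ((n:ℝ) + 2) * x := by positivity
      calc ((n:ℝ) + 2) * x * Real.Gamma X * X = ((n:ℝ) + 2) * x * (Real.Gamma X * X) := by ring
        _ ≤ _ := mul_le_mul_of_nonneg_left hGb hnx
    have h3 : 2 * (((n:ℝ) + 2) * x) ≤ (1/2) * ((n:ℝ)+1) * X ^ a := by
      nlinarith [mul_le_mul_of_nonneg_left hXpow (by positivity : (0:ℝ) ≤ (1/2) * ((n:ℝ)+1)),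
        mul_nonneg hn0 hx]
    have h4 : ((n:ℝ) + 2) * x * (2 * Real.Gamma (X + a) * X ^ (1 - a))
        ≤ (1/2) * ((n:ℝ)+1) * Real.Gamma (X + a) * X := by
      calc ((n:ℝ) + 2) * x * (2 * Real.Gamma (X + a) * X ^ (1 - a))
          = (2 * (((n:ℝ) + 2) * x)) * (Real.Gamma (X + a) * X ^ (1 - a)) := by ring
        _ ≤ ((1/2) * ((n:ℝ)+1) * X ^ a) * (Real.Gamma (X + a) * X ^ (1 - a)) :=
            mul_le_mul_of_nonneg_right h3 (by positivity)
        _ = (1/2) * ((n:ℝ)+1) * Real.Gamma (X + a) * (X ^ (1-a) * X ^ a) := by ring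
        _ = (1/2) * ((n:ℝ)+1) * Real.Gamma (X + a) * X := by rw [hXsplit]
    exact le_of_mul_le_mul_right (h1.trans h4) hX0
  have hxpow : (0:ℝ) ≤ x ^ n := pow_nonneg hx n
  have hterm : ∀ m : ℕ, ‖((m : ℝ) + 1) * x ^ m / Real.Gamma (a * m + b)‖
      = ((m : ℝ) + 1) * x ^ m / Real.Gamma (a * m + b) := by
    intro m
    rw [Real.norm_eq_abs, abs_of_nonneg]
    positivity
  rw [hterm, hterm]
  have hcast : a * ((n : ℝ) + 1) + b = X + a := by push_cast [hX]; ring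
  push_cast
  rw [hcast, ← hX, mul_div_assoc' (1/2), div_le_div_iff₀ hGXa hGX, pow_succ]
  calc ((n:ℝ) + 1 + 1) * (x ^ n * x) * Real.Gamma X
      = (((n:ℝ) + 2) * x * Real.Gamma X) * x ^ n := by ring
    _ ≤ ((1/2) * ((n:ℝ)+1) * Real.Gamma (X + a)) * x ^ n := by
        apply mul_le_mul_of_nonneg_right key hxpow
    _ = 1 / 2 * (((n:ℝ) + 1) * x ^ n) * Real.Gamma (X+a) := by ring

-- summability of the derivative-type series
theorem summable_deriv_series (a c w : ℝ) (ha : 0 < a) (ha1 : a ≤ 1) (hw : 0 < w) :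
    Summable (fun r : ℕ => |c| ^ r * (a * r * w ^ (a * r - 1)) / Real.Gamma (a * r + 1)) := by
  have hx : (0:ℝ) ≤ |c| * w ^ a := by positivity
  refine Summable.of_nonneg_of_le (fun r => by positivity) (fun r => ?_)
    (((summable_aux a 1 (|c| * w ^ a) ha ha1 one_pos hx).mul_left (a / w)))
  have hwpow : w ^ (a * (r:ℝ) - 1) = (w ^ a) ^ r / w := by
    rw [Real.rpow_sub hw, Real.rpow_one, ← Real.rpow_natCast (w ^ a) r,
      ← Real.rpow_mul hw.le, mul_comm a (r:ℝ)]
  have hG : 0 < Real.Gamma (a * r + 1) := Real.Gamma_pos_of_pos (by positivity)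
  rw [hwpow]
  have h1 : |c| ^ r * (a * ↑r * ((w ^ a) ^ r / w)) / Real.Gamma (a * ↑r + 1)
      = (a * ↑r / w) * ((|c| * w ^ a) ^ r / Real.Gamma (a * ↑r + 1)) := by
    rw [mul_pow]; field_simp
  have h2 : a / w * (((r:ℝ) + 1) * (|c| * w ^ a) ^ r / Real.Gamma (a * ↑r + 1))
      = (a * ((r:ℝ) + 1) / w) * ((|c| * w ^ a) ^ r / Real.Gamma (a * ↑r + 1)) := by
    field_simp
  rw [h1, h2]
  apply mul_le_mul_of_nonneg_right ?_ (by positivity)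
  gcongr
  linarith

theorem summable_ML_series (a b c : ℝ) (ha : 0 < a) (ha1 : a ≤ 1) (hb : 0 < b) :
    Summable (fun r : ℕ => c ^ r / Real.Gamma (a * r + b)) := by
  apply Summable.of_abs
  refine Summable.of_nonneg_of_le (fun r => abs_nonneg _) (fun r => ?_)
    (summable_aux a b |c| ha ha1 hb (abs_nonneg c))
  have hG : 0 < Real.Gamma (a * r + b) := Real.Gamma_pos_of_pos (by positivity)
  rw [abs_div, abs_of_pos hG, abs_pow]
  gcongr
  nlinarith [pow_nonneg (abs_nonneg c) r]

theorem hasDerivAt_ML (a c : ℝ) (ha : 0 < a) (ha1 : a < 1) {y : ℝ} (hy : 0 < y) :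
    HasDerivAt (fun s => ML1 a (c * s ^ a))
      (∑' r : ℕ, c ^ r * (a * r) * y ^ (a * r - 1) / Real.Gamma (a * r + 1)) y := by
  set g : ℕ → ℝ → ℝ := fun r z => c ^ r * z ^ (a * (r:ℝ)) / Real.Gamma (a * r + 1) with hg_def
  set g' : ℕ → ℝ → ℝ :=
    fun r z => c ^ r * (a * (r:ℝ) * z ^ (a * (r:ℝ) - 1)) / Real.Gamma (a * r + 1) with hg'_def
  set u : ℕ → ℝ := fun r =>
    |c| ^ r * (a * r * (y/2) ^ (a * (r:ℝ) - 1)) / Real.Gamma (a * r + 1)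
    + |c| ^ r * (a * r * (2*y) ^ (a * (r:ℝ) - 1)) / Real.Gamma (a * r + 1) with hu_def
  have hu : Summable u :=
    (summable_deriv_series a c (y/2) ha ha1.le (by linarith)).add
      (summable_deriv_series a c (2*y) ha ha1.le (by linarith))
  have hT : ∀ z ∈ Ioo (y/2) (2*y), (0:ℝ) < z := fun z hz => by
    have := hz.1; linarith
  have hg : ∀ r, ∀ z ∈ Ioo (y/2) (2*y), HasDerivAt (g r) (g' r z) z := by
    intro r z hz
    have h0 : z ≠ 0 := (hT z hz).ne'
    exact ((Real.hasDerivAt_rpow_const (Or.inl h0)).const_mul (c ^ r)).div_const _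
  have hbound : ∀ r, ∀ z ∈ Ioo (y/2) (2*y), ‖g' r z‖ ≤ u r := by
    intro r z hz
    have hz0 : 0 < z := hT z hz
    have hG : 0 < Real.Gamma (a * r + 1) := Real.Gamma_pos_of_pos (by positivity)
    have habs : ‖g' r z‖ = |c| ^ r * (a * (r:ℝ) * z ^ (a * (r:ℝ) - 1)) / Real.Gamma (a * r + 1) := by
      rw [hg'_def, Real.norm_eq_abs, abs_div, abs_of_pos hG, abs_mul, abs_pow, abs_mul,
        abs_of_nonneg (by positivity : (0:ℝ) ≤ a * (r:ℝ)),
        abs_of_pos (Real.rpow_pos_of_pos hz0 _)]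
    rw [habs, hu_def]
    have hzb : z ^ (a * (r:ℝ) - 1) ≤ (y/2) ^ (a * (r:ℝ) - 1) + (2*y) ^ (a * (r:ℝ) - 1) := by
      rcases le_or_gt (a * (r:ℝ) - 1) 0 with h | h
      · have h1 : z ^ (a * (r:ℝ) - 1) ≤ (y/2) ^ (a * (r:ℝ) - 1) :=
          Real.rpow_le_rpow_of_nonpos (by linarith) hz.1.le h
        have h2 : (0:ℝ) ≤ (2*y) ^ (a * (r:ℝ) - 1) := Real.rpow_nonneg (by linarith) _
        linarith
      · have h1 : z ^ (a * (r:ℝ) - 1) ≤ (2*y) ^ (a * (r:ℝ) - 1) :=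
          Real.rpow_le_rpow hz0.le hz.2.le h.le
        have h2 : (0:ℝ) ≤ (y/2) ^ (a * (r:ℝ) - 1) := Real.rpow_nonneg (by linarith) _
        linarith
    have hcr : (0:ℝ) ≤ |c| ^ r := by positivity
    simp only [← add_div]
    gcongr
    have h3 := mul_le_mul_of_nonneg_left (mul_le_mul_of_nonneg_left hzb
      (mul_nonneg ha.le (Nat.cast_nonneg r))) (pow_nonneg (abs_nonneg c) r)
    nlinarith [h3]
  have hg0 : Summable fun r => g r y := by
    apply Summable.of_abs
    refine Summable.of_nonneg_of_le (fun r => abs_nonneg _) (fun r => ?_)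
      (summable_aux a 1 (|c| * y ^ a) ha ha1.le one_pos (by positivity))
    have hG : 0 < Real.Gamma (a * r + 1) := Real.Gamma_pos_of_pos (by positivity)
    rw [hg_def]
    simp only [abs_div, abs_of_pos hG, abs_mul, abs_pow,
      abs_of_pos (Real.rpow_pos_of_pos hy (a * (r:ℝ)))]
    have hyr : y ^ (a * (r:ℝ)) = (y ^ a) ^ r := by
      rw [← Real.rpow_natCast (y ^ a) r, ← Real.rpow_mul hy.le]
    rw [hyr, ← mul_pow]
    have : (0:ℝ) ≤ (|c| * y ^ a) ^ r := by positivity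
    gcongr
    nlinarith
  have hderiv : HasDerivAt (fun z => ∑' r, g r z) (∑' r, g' r y) y :=
    hasDerivAt_tsum_of_isPreconnected hu isOpen_Ioo (convex_Ioo _ _).isPreconnected
      hg hbound (by constructor <;> linarith) hg0 (by constructor <;> linarith)
  have heq : (fun s => ML1 a (c * s ^ a)) =ᶠ[nhds y] (fun z => ∑' r, g r z) := by
    filter_upwards [isOpen_Ioi.mem_nhds (mem_Ioi.2 hy)] with s hs
    have hs0 : (0:ℝ) < s := hs
    rw [ML1, ML2]
    apply tsum_congr; intro r
    rw [hg_def]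
    rw [mul_pow, ← Real.rpow_natCast (s ^ a) r, ← Real.rpow_mul hs0.le]
  have := hderiv.congr_of_eventuallyEq heq
  refine this.congr_deriv ?_
  apply tsum_congr; intro r
  rw [hg'_def]; ring

theorem beta_intervalIntegrable_s12 (p q : ℝ) (hp : 0 < p) (hq : 0 < q) :
    IntervalIntegrable (fun x : ℝ => x ^ (p-1) * (1 - x) ^ (q-1)) volume 0 1 := by
  have hc := Complex.betaIntegral_convergent (u := (p:ℂ)) (v := (q:ℂ)) (by simpa) (by simpa)
  constructor
  · have h1 : IntegrableOn (fun x : ℝ =>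
        Complex.re ((x:ℂ) ^ ((p:ℂ)-1) * (1 - (x:ℂ)) ^ ((q:ℂ)-1))) (Ioc (0:ℝ) 1) := hc.1.re
    apply h1.congr_fun ?_ measurableSet_Ioc
    intro x hx
    have hx0 : (0:ℝ) ≤ x := hx.1.le
    have hx1 : (0:ℝ) ≤ 1 - x := by linarith [hx.2]
    have e1 : ((x:ℂ)) ^ ((p:ℂ)-1) = ((x ^ (p-1) : ℝ) : ℂ) := by
      rw [Complex.ofReal_cpow hx0]; push_cast; ring_nf
    have e2 : ((1:ℂ) - (x:ℂ)) ^ ((q:ℂ)-1) = (((1-x) ^ (q-1) : ℝ) : ℂ) := by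
      rw [Complex.ofReal_cpow hx1]; push_cast; ring_nf
    simp [e1, e2, ← Complex.ofReal_mul]
  · simp [Ioc_eq_empty_of_le]

theorem beta_scaled_integrable (p q t : ℝ) (hp : 0 < p) (hq : 0 < q) (ht : 0 < t) :
    IntegrableOn (fun y : ℝ => y ^ (p-1) * (t - y) ^ (q-1)) (Ioc 0 t) := by
  have h0 := beta_intervalIntegrable_s12 p q hp hq
  have h1 : IntervalIntegrable (fun y : ℝ => (t⁻¹ * y) ^ (p-1) * (1 - t⁻¹ * y) ^ (q-1))
      volume 0 t := by
    have := h0.comp_mul_left (c := t⁻¹) enorm_ne_top enorm_ne_top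
    simpa [ht.ne'] using this
  have h2 := (h1.const_mul (t ^ (p-1) * t ^ (q-1))).1
  apply h2.congr_fun ?_ measurableSet_Ioc
  intro y hy
  have hy0 : (0:ℝ) ≤ y := hy.1.le
  have hty : (0:ℝ) ≤ t - y := by linarith [hy.2]
  have e0 : (1 : ℝ) - t⁻¹ * y = (t - y) * t⁻¹ := by field_simp
  simp only [e0, Real.mul_rpow (inv_nonneg.2 ht.le) hy0, Real.mul_rpow hty (inv_nonneg.2 ht.le),
    Real.inv_rpow ht.le, Real.inv_rpow ht.le]
  have g1 : (0:ℝ) < t ^ (p-1) := Real.rpow_pos_of_pos ht _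
  have g2 : (0:ℝ) < t ^ (q-1) := Real.rpow_pos_of_pos ht _
  field_simp

theorem beta_scaled_value (p q t : ℝ) (hp : 0 < p) (hq : 0 < q) (ht : 0 < t) :
    ∫ y in Ioc 0 t, y ^ (p-1) * (t - y) ^ (q-1)
      = Real.Gamma p * Real.Gamma q / Real.Gamma (p+q) * t ^ (p+q-1) := by
  have hsc := Complex.betaIntegral_scaled (p:ℂ) (q:ℂ) ht
  have hB : Complex.betaIntegral (p:ℂ) (q:ℂ)
      = (Real.Gamma p : ℂ) * (Real.Gamma q) / (Real.Gamma (p+q)) := by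
    have hG := Complex.Gamma_mul_Gamma_eq_betaIntegral
      (s := (p:ℂ)) (t := (q:ℂ)) (by simpa) (by simpa)
    have hpq : ((p:ℂ) + (q:ℂ)) = ((p + q : ℝ) : ℂ) := by push_cast; ring
    rw [hpq, Complex.Gamma_ofReal, Complex.Gamma_ofReal, Complex.Gamma_ofReal] at hG
    rw [eq_div_iff (by exact_mod_cast (Real.Gamma_pos_of_pos (by linarith)).ne')]
    rw [mul_comm, ← hG]
  have hL : (∫ x in (0:ℝ)..t, (x:ℂ) ^ ((p:ℂ) - 1) * ((t:ℂ) - (x:ℂ)) ^ ((q:ℂ) - 1))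
      = ((∫ y in (0:ℝ)..t, y ^ (p-1) * (t - y) ^ (q-1) : ℝ) : ℂ) := by
    rw [← intervalIntegral.integral_ofReal]
    apply intervalIntegral.integral_congr
    intro x hx
    rw [uIcc_of_le ht.le] at hx
    have hx0 : (0:ℝ) ≤ x := hx.1
    have htx : (0:ℝ) ≤ t - x := by linarith [hx.2]
    have e1 : ((x:ℂ)) ^ ((p:ℂ)-1) = ((x ^ (p-1) : ℝ) : ℂ) := by
      rw [Complex.ofReal_cpow hx0]; push_cast; ring_nf
    have e2 : ((t:ℂ) - (x:ℂ)) ^ ((q:ℂ)-1) = (((t-x) ^ (q-1) : ℝ) : ℂ) := by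
      rw [Complex.ofReal_cpow htx]; push_cast; ring_nf
    simp only [e1, e2, ← Complex.ofReal_mul]
  have hR : ((t:ℂ)) ^ ((p:ℂ) + (q:ℂ) - 1) = ((t ^ (p+q-1) : ℝ) : ℂ) := by
    rw [Complex.ofReal_cpow ht.le]; push_cast; ring_nf
  rw [hL, hR, hB] at hsc
  have : ((∫ y in (0:ℝ)..t, y ^ (p-1) * (t - y) ^ (q-1) : ℝ) : ℂ)
      = (((Real.Gamma p * Real.Gamma q / Real.Gamma (p+q)) * t ^ (p+q-1) : ℝ) : ℂ) := by
    rw [hsc]; push_cast; ring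
  have h2 := Complex.ofReal_inj.1 this
  rw [← intervalIntegral.integral_of_le ht.le]
  rw [h2]

/-- terms of the derivative series -/
noncomputable def gAux (a c : ℝ) (r : ℕ) (y : ℝ) : ℝ :=
  c ^ r * (a * r) * y ^ (a * r - 1) / Real.Gamma (a * r + 1)

/-- weighted integrand -/
noncomputable def fAux (a t c : ℝ) (r : ℕ) (y : ℝ) : ℝ := (t - y) ^ (-a) * gAux a c r y

/-- value of `∫ fAux` -/
noncomputable def vAux (a t c : ℝ) : ℕ → ℝ
  | 0 => 0
  | (k+1) => c ^ (k+1) * (Real.Gamma (1-a) * t ^ (a*k) / Real.Gamma (a*k+1))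

theorem fAux_zero (a t c y : ℝ) : fAux a t c 0 y = 0 := by
  simp [fAux, gAux]

theorem fAux_succ_eq (a t c : ℝ) (k : ℕ) :
    fAux a t c (k+1) = fun y => (c^(k+1) * (a*((k:ℝ)+1)) / Real.Gamma (a*((k:ℝ)+1)+1)) *
      (y ^ (a*((k:ℝ)+1) - 1) * (t - y) ^ ((1-a) - 1)) := by
  funext y
  have h : (1-a) - 1 = -a := by ring
  rw [h, fAux, gAux]
  push_cast
  ring

theorem fAux_int (a t c : ℝ) (ha : 0 < a) (ha1 : a < 1) (ht : 0 < t) (k : ℕ) :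
    IntegrableOn (fAux a t c (k+1)) (Ioc 0 t) := by
  rw [fAux_succ_eq]
  exact (beta_scaled_integrable (a*((k:ℝ)+1)) (1-a) t (by positivity) (by linarith) ht).const_mul _

theorem fAux_val (a t c : ℝ) (ha : 0 < a) (ha1 : a < 1) (ht : 0 < t) (k : ℕ) :
    ∫ y in Ioc 0 t, fAux a t c (k+1) y = vAux a t c (k+1) := by
  rw [fAux_succ_eq]
  rw [integral_const_mul,
    beta_scaled_value (a*((k:ℝ)+1)) (1-a) t (by positivity) (by linarith) ht]
  have e1 : a*((k:ℝ)+1) + (1-a) = a*k + 1 := by ring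
  have e2 : a*(k:ℝ) + 1 - 1 = a*k := by ring
  rw [e1, e2, vAux]
  have hp : (0:ℝ) < a*((k:ℝ)+1) := by positivity
  have hΓ : Real.Gamma (a*((k:ℝ)+1)+1) = (a*((k:ℝ)+1)) * Real.Gamma (a*((k:ℝ)+1)) :=
    Real.Gamma_add_one hp.ne'
  rw [hΓ]
  have h1 : Real.Gamma (a*((k:ℝ)+1)) ≠ 0 := (Real.Gamma_pos_of_pos hp).ne'
  have h2 : Real.Gamma (a*(k:ℝ)+1) ≠ 0 :=
    (Real.Gamma_pos_of_pos (by positivity)).ne'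
  field_simp

theorem vAux_summable (a t c : ℝ) (ha : 0 < a) (ha1 : a < 1) (ht : 0 < t) :
    Summable (vAux a t c) := by
  rw [← summable_nat_add_iff 1]
  have hs := (summable_ML_series a 1 (c * t^a) ha ha1.le one_pos).mul_left
    (c * Real.Gamma (1-a))
  apply hs.congr
  intro k
  show c * Real.Gamma (1-a) * ((c * t^a)^k / Real.Gamma (a*k+1)) = vAux a t c (k+1)
  rw [vAux, mul_pow, ← Real.rpow_natCast (t^a) k, ← Real.rpow_mul ht.le]
  field_simp
  ring

theorem vAux_tsum (a t c : ℝ) (ha : 0 < a) (ha1 : a < 1) (ht : 0 < t) :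
    ∑' r, vAux a t c r = Real.Gamma (1-a) * (c * ML1 a (c * t^a)) := by
  rw [(vAux_summable a t c ha ha1 ht).tsum_eq_zero_add]
  show vAux a t c 0 + ∑' k : ℕ, vAux a t c (k+1) = _
  rw [show vAux a t c 0 = 0 from rfl, zero_add]
  have hterm : ∀ k : ℕ, vAux a t c (k+1)
      = (Real.Gamma (1-a) * c) * ((c * t^a)^k / Real.Gamma (a*k+1)) := by
    intro k
    rw [vAux, mul_pow, ← Real.rpow_natCast (t^a) k, ← Real.rpow_mul ht.le]
    field_simp
    ring
  rw [tsum_congr hterm, tsum_mul_left, ML1, ML2]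
  ring

theorem gAux_abs (a c : ℝ) (ha : 0 < a) (r : ℕ) {y : ℝ} (hy : 0 < y) :
    |gAux a c r y| = |c| ^ r * (a * r * y ^ (a * (r:ℝ) - 1)) / Real.Gamma (a * r + 1)
      := by
  have hG : 0 < Real.Gamma (a * r + 1) := Real.Gamma_pos_of_pos (by positivity)
  rw [gAux, abs_div, abs_of_pos hG, abs_mul, abs_mul, abs_pow,
    abs_of_nonneg (by positivity : (0:ℝ) ≤ a * (r:ℝ)),
    abs_of_pos (Real.rpow_pos_of_pos hy _), mul_assoc]

theorem gAux_summable (a c : ℝ) (ha : 0 < a) (ha1 : a < 1) {y : ℝ} (hy : 0 < y) :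
    Summable (fun r => gAux a c r y) := by
  apply Summable.of_abs
  have hs : Summable (fun r : ℕ => |c| ^ r * (a * r * y ^ (a * (r:ℝ) - 1)) /
      Real.Gamma (a * r + 1)) := summable_deriv_series a c y ha ha1.le hy
  exact hs.congr (fun r => (gAux_abs a c ha r hy).symm)

theorem fAux_abs (a t c : ℝ) (ha : 0 < a) (r : ℕ) {y : ℝ} (hy : y ∈ Ioc 0 t) :
    |fAux a t c r y| = fAux a t |c| r y := by
  have h1 : (0:ℝ) ≤ (t - y) ^ (-a) := Real.rpow_nonneg (by linarith [hy.2]) _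
  rw [fAux, fAux, abs_mul, abs_of_nonneg h1, gAux_abs a c ha r hy.1, gAux]
  ring

theorem vAux_nonneg (a t c : ℝ) (ha : 0 < a) (ha1 : a < 1) (ht : 0 < t) (hc : 0 ≤ c)
    (r : ℕ) : 0 ≤ vAux a t c r := by
  cases r with
  | zero => exact le_refl 0
  | succ k =>
    rw [vAux]
    have := Real.Gamma_pos_of_pos (show (0:ℝ) < 1 - a by linarith)
    have := Real.Gamma_pos_of_pos (show (0:ℝ) < a * k + 1 by positivity)
    positivity

theorem main_integral (a t kk c1 c2 : ℝ) (ha : 0 < a) (ha1 : a < 1) (ht : 0 < t) :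
    ∫ y in Ioc 0 t, (t - y) ^ (-a) *
        (kk * ((∑' r : ℕ, gAux a c1 r y) - ∑' r : ℕ, gAux a c2 r y))
      = Real.Gamma (1-a) * (kk * (c1 * ML1 a (c1 * t^a) - c2 * ML1 a (c2 * t^a))) := by
  set F : ℕ → ℝ → ℝ := fun r y => kk * fAux a t c1 r y - kk * fAux a t c2 r y with hF
  -- pointwise identity on Ioc
  have hpt : ∀ y ∈ Ioc (0:ℝ) t,
      (t - y) ^ (-a) * (kk * ((∑' r : ℕ, gAux a c1 r y) - ∑' r : ℕ, gAux a c2 r y))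
        = ∑' r : ℕ, F r y := by
    intro y hy
    have h1 := gAux_summable a c1 ha ha1 hy.1
    have h2 := gAux_summable a c2 ha ha1 hy.1
    rw [← h1.tsum_sub h2, ← tsum_mul_left, ← tsum_mul_left]
    apply tsum_congr; intro r
    simp only [hF, fAux]
    ring
  rw [setIntegral_congr_fun measurableSet_Ioc hpt]
  -- integrability of each term
  have hFint : ∀ r : ℕ, IntegrableOn (F r) (Ioc 0 t) := by
    intro r
    cases r with
    | zero =>
      have : F 0 = fun _ => 0 := by
        funext y; simp [hF, fAux_zero]
      rw [this]; exact integrableOn_zero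
    | succ k =>
      exact ((fAux_int a t c1 ha ha1 ht k).const_mul kk).sub
        ((fAux_int a t c2 ha ha1 ht k).const_mul kk)
  -- bound on integrals of norms
  set B : ℕ → ℝ := fun r => |kk| * (vAux a t |c1| r + vAux a t |c2| r) with hB
  have hBsum : Summable B :=
    ((vAux_summable a t |c1| ha ha1 ht).add (vAux_summable a t |c2| ha ha1 ht)).mul_left _
  have hBnonneg : ∀ r, 0 ≤ B r := fun r => by
    have := vAux_nonneg a t |c1| ha ha1 ht (abs_nonneg c1) r
    have := vAux_nonneg a t |c2| ha ha1 ht (abs_nonneg c2) r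
    positivity
  have hnorm : ∀ r : ℕ, ∫ y in Ioc 0 t, ‖F r y‖ ≤ B r := by
    intro r
    cases r with
    | zero =>
      have : F 0 = fun _ => 0 := by funext y; simp [hF, fAux_zero]
      rw [this]
      simpa using hBnonneg 0
    | succ k =>
      have hint1 := fAux_int a t |c1| ha ha1 ht k
      have hint2 := fAux_int a t |c2| ha ha1 ht k
      have hrhs : IntegrableOn
          (fun y => |kk| * (fAux a t |c1| (k+1) y + fAux a t |c2| (k+1) y)) (Ioc 0 t) :=
        (hint1.add hint2).const_mul _
      have hmono := setIntegral_mono_on ((hFint (k+1)).norm) hrhs measurableSet_Ioc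
        (fun y hy => ?_)
      · calc ∫ y in Ioc 0 t, ‖F (k+1) y‖
            ≤ ∫ y in Ioc 0 t, |kk| * (fAux a t |c1| (k+1) y + fAux a t |c2| (k+1) y) := hmono
          _ = |kk| * ((∫ y in Ioc 0 t, fAux a t |c1| (k+1) y)
              + ∫ y in Ioc 0 t, fAux a t |c2| (k+1) y) := by
              rw [integral_const_mul, integral_add hint1 hint2]
          _ = B (k+1) := by
              rw [hB, fAux_val a t |c1| ha ha1 ht k, fAux_val a t |c2| ha ha1 ht k]
      · rw [Real.norm_eq_abs, hF]
        calc |kk * fAux a t c1 (k+1) y - kk * fAux a t c2 (k+1) y|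
            ≤ |kk * fAux a t c1 (k+1) y| + |kk * fAux a t c2 (k+1) y| := abs_sub _ _
          _ = |kk| * (fAux a t |c1| (k+1) y + fAux a t |c2| (k+1) y) := by
              rw [abs_mul, abs_mul, fAux_abs a t c1 ha _ hy, fAux_abs a t c2 ha _ hy]; ring
  -- measurability
  have hmeas : ∀ r : ℕ, AEStronglyMeasurable (F r) (volume.restrict (Ioc 0 t)) := by
    intro r
    apply Measurable.aestronglyMeasurable
    simp only [hF, fAux, gAux]
    fun_prop
  -- apply integral_tsum
  rw [MeasureTheory.integral_tsum hmeas ?_]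
  · -- compute the sum of integrals
    have hIval : ∀ r : ℕ, ∫ y in Ioc 0 t, F r y
        = kk * vAux a t c1 r - kk * vAux a t c2 r := by
      intro r
      cases r with
      | zero =>
        have : F 0 = fun _ => 0 := by funext y; simp [hF, fAux_zero]
        rw [this]; simp [vAux]
      | succ k =>
        rw [hF]
        rw [integral_sub ((fAux_int a t c1 ha ha1 ht k).const_mul kk)
          ((fAux_int a t c2 ha ha1 ht k).const_mul kk),
          integral_const_mul, integral_const_mul,
          fAux_val a t c1 ha ha1 ht k, fAux_val a t c2 ha ha1 ht k]
    rw [tsum_congr hIval,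
      ((vAux_summable a t c1 ha ha1 ht).mul_left kk).tsum_sub
        ((vAux_summable a t c2 ha ha1 ht).mul_left kk),
      tsum_mul_left, tsum_mul_left, vAux_tsum a t c1 ha ha1 ht, vAux_tsum a t c2 ha ha1 ht]
    ring
  · -- finiteness of lintegral sum
    have hle : ∀ r : ℕ, ∫⁻ y in Ioc 0 t, ‖F r y‖ₑ ≤ ENNReal.ofReal (B r) := by
      intro r
      rw [← MeasureTheory.ofReal_integral_norm_eq_lintegral_enorm (hFint r)]
      exact ENNReal.ofReal_le_ofReal (hnorm r)
    have hfin : (∑' r : ℕ, ∫⁻ y in Ioc 0 t, ‖F r y‖ₑ) < ⊤ :=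
      calc ∑' r : ℕ, ∫⁻ y in Ioc 0 t, ‖F r y‖ₑ
          ≤ ∑' r : ℕ, ENNReal.ofReal (B r) := ENNReal.tsum_le_tsum hle
        _ = ENNReal.ofReal (∑' r, B r) := (ENNReal.ofReal_tsum_of_nonneg hBnonneg hBsum).symm
        _ < ⊤ := ENNReal.ofReal_lt_top
    exact hfin.ne

theorem second_factorial_moment_solves_fde
    (lam mu ν a : ℝ) (hlam : 0 < lam) (hmu : 0 < mu) (hne : lam ≠ mu)
    (hν : 0 ≤ ν) (ha : 0 < a) (ha1 : a < 1) :
    (∀ t > (0 : ℝ),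
      caputo a (fun s => (2 * lam / (lam - mu)) *
          (ML1 a ((2 * lam - 2 * mu - ν) * s ^ a) - ML1 a ((lam - mu - ν) * s ^ a))) t
        = (2 * lam - 2 * mu - ν) * ((2 * lam / (lam - mu)) *
            (ML1 a ((2 * lam - 2 * mu - ν) * t ^ a) - ML1 a ((lam - mu - ν) * t ^ a)))
          + 2 * lam * ML1 a ((lam - mu - ν) * t ^ a)) ∧
    (2 * lam / (lam - mu)) *
        (ML1 a ((2 * lam - 2 * mu - ν) * (0 : ℝ) ^ a)
          - ML1 a ((lam - mu - ν) * (0 : ℝ) ^ a)) = 0 := by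
  constructor
  · intro t ht
    set kk : ℝ := 2 * lam / (lam - mu) with hkk
    set c1 : ℝ := 2 * lam - 2 * mu - ν with hc1
    set c2 : ℝ := lam - mu - ν with hc2
    have hderiv : ∀ y ∈ Ioc (0:ℝ) t,
        deriv (fun s => kk * (ML1 a (c1 * s ^ a) - ML1 a (c2 * s ^ a))) y
          = kk * ((∑' r : ℕ, gAux a c1 r y) - ∑' r : ℕ, gAux a c2 r y) := by
      intro y hy
      have h := ((hasDerivAt_ML a c1 ha ha1 hy.1).sub
        (hasDerivAt_ML a c2 ha ha1 hy.1)).const_mul kk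
      refine h.deriv.trans ?_
      simp only [gAux]
    rw [caputo, intervalIntegral.integral_of_le ht.le,
      setIntegral_congr_fun measurableSet_Ioc (fun y hy => by rw [hderiv y hy]),
      main_integral a t kk c1 c2 ha ha1 ht]
    have hΓ : Real.Gamma (1 - a) ≠ 0 :=
      (Real.Gamma_pos_of_pos (by linarith)).ne'
    have hlm : lam - mu ≠ 0 := sub_ne_zero.2 hne
    rw [hkk, hc1, hc2]
    field_simp
    ring
  · rw [Real.zero_rpow ha.ne', mul_zero, mul_zero, sub_self, mul_zero]
end

section
/- For θ > 0, 0 < α < 1, ν > 0 and t > 0, the function x(t) = e^{-θt} ∑_{n=0}^∞ ∑_{r=0}^∞ (-ν t^α)^n (θ t)^r E_{α,nα+r+1}^{n}(θ^α t^α) satisfies ∫₀^∞ e^{-zt} x(t) dt = φ(z)/(z(φ(z)+ν)) for all sufficiently large z > 0, where φ(z) = (z+θ)^α - θ^α. -/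
open Real MeasureTheory Set

/-- Three-parameter Mittag-Leffler function with nonnegative integer upper
parameter `γ`, using the rising factorial (convention `E^0_{a,b}(t) = 1/Γ(b)`). -/
noncomputable def ML3nat (a b : ℝ) (γ : ℕ) (t : ℝ) : ℝ :=
  ∑' r : ℕ, (γ.ascFactorial r : ℝ) * t ^ r /
    ((r.factorial : ℝ) * Real.Gamma (a * r + b))

/- ### Auxiliary machinery -/

lemma negBinom' {q : ℝ} (hq : |q| < 1) (n : ℕ) :
    HasSum (fun k : ℕ => (Nat.ascFactorial n k : ℝ) / (Nat.factorial k) * q ^ k)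
      (((1 - q) ^ n)⁻¹) := by
  cases n with
  | zero =>
      have : (fun k : ℕ => (Nat.ascFactorial 0 k : ℝ) / (Nat.factorial k) * q ^ k)
          = fun k : ℕ => if k = 0 then (1:ℝ) else 0 := by
        funext k
        cases k with
        | zero => simp
        | succ m => simp [Nat.zero_ascFactorial]
      rw [this]
      simpa using hasSum_ite_eq (0 : ℕ) (1 : ℝ)
  | succ m =>
      have h := hasSum_choose_mul_geometric_of_norm_lt_one (𝕜 := ℝ) m
        (by rwa [Real.norm_eq_abs] : ‖q‖ < 1)
      have heq : (fun k : ℕ => ((k + m).choose m : ℝ) * q ^ k)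
          = fun k : ℕ => (Nat.ascFactorial (m+1) k : ℝ) / (Nat.factorial k) * q ^ k := by
        funext k
        congr 1
        rw [Nat.ascFactorial_eq_factorial_mul_choose]
        have hc : (m + k).choose k = (k + m).choose m := by
          have := Nat.choose_symm (Nat.le_add_right k m)
          rw [Nat.add_comm m k]
          simpa using this.symm
        rw [hc]
        push_cast
        rw [mul_comm, mul_div_assoc, div_self (by positivity), mul_one]
      rw [heq] at h
      rw [one_div] at h
      exact h

lemma gammaInt {w c E : ℝ} (hw : 0 < w) (hE : 0 ≤ E) :
    ∫ t in Ioi (0:ℝ), Real.exp (-(w * t)) * (c * t ^ E)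
      = c * (w⁻¹ ^ (E + 1) * Real.Gamma (E + 1)) := by
  have h : ∀ t : ℝ, Real.exp (-(w * t)) * (c * t ^ E)
      = c * (t ^ (E + 1 - 1) * Real.exp (-(w * t))) := by
    intro t; rw [add_sub_cancel_right]; ring
  simp_rw [h]
  rw [MeasureTheory.integral_const_mul,
    Real.integral_rpow_mul_exp_neg_mul_Ioi (by linarith) hw, one_div]

lemma gammaIntegrable {w c E : ℝ} (hw : 0 < w) (hE : 0 ≤ E) :
    IntegrableOn (fun t => Real.exp (-(w * t)) * (c * t ^ E)) (Ioi (0:ℝ)) volume := by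
  have h : IntegrableOn (fun x : ℝ => c * (x ^ E * Real.exp (-w * x ^ (1:ℝ)))) (Ioi 0) volume :=
    (integrableOn_rpow_mul_exp_neg_mul_rpow (p := 1) (s := E) (b := w)
      (by linarith) zero_lt_one hw).const_mul c
  refine h.congr_fun (fun t ht => ?_) measurableSet_Ioi
  simp only [Real.rpow_one]
  ring

lemma gammaLint {w c E : ℝ} (hw : 0 < w) (hE : 0 ≤ E) :
    ∫⁻ t in Ioi (0:ℝ), ‖Real.exp (-(w * t)) * (c * t ^ E)‖₊
      = ENNReal.ofReal (|c| * (w⁻¹ ^ (E + 1) * Real.Gamma (E + 1))) := by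
  simp_rw [← enorm_eq_nnnorm]
  rw [← MeasureTheory.ofReal_integral_norm_eq_lintegral_enorm (gammaIntegrable hw hE)]
  congr 1
  rw [← gammaInt (c := |c|) hw hE]
  refine setIntegral_congr_fun measurableSet_Ioi (fun t ht => ?_)
  have ht0 : (0:ℝ) < t := ht
  rw [Real.norm_eq_abs, abs_mul, abs_mul, abs_of_pos (Real.exp_pos _),
    abs_of_pos (Real.rpow_pos_of_pos ht0 E)]

noncomputable def Fsh (u s q : ℝ) (p : ℕ × ℕ × ℕ) : ℝ :=
  u ^ p.1 * (s ^ p.2.1 * ((Nat.ascFactorial p.1 p.2.2 : ℝ) / (Nat.factorial p.2.2) * q ^ p.2.2))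

section
variable {u s q : ℝ} (hs0 : 0 ≤ s) (hs1 : s < 1) (hq0 : 0 ≤ q) (hq1 : q < 1)
  (hu : |u| < 1 - q)

include hs0 hq0 in
lemma Fsh_nonneg (hu0 : 0 ≤ u) (p : ℕ × ℕ × ℕ) : 0 ≤ Fsh u s q p := by
  unfold Fsh
  exact mul_nonneg (pow_nonneg hu0 _) (mul_nonneg (pow_nonneg hs0 _)
    (mul_nonneg (div_nonneg (Nat.cast_nonneg _) (Nat.cast_nonneg _)) (pow_nonneg hq0 _)))

include hs0 hq0 in
lemma Fsh_abs (p : ℕ × ℕ × ℕ) : |Fsh u s q p| = Fsh |u| s q p := by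
  unfold Fsh
  simp [abs_mul, abs_pow, abs_of_nonneg hs0, abs_of_nonneg hq0, abs_div, Nat.abs_cast]

include hs0 hs1 hq0 hq1 in
lemma Fsh_inner_summable (C : ℝ) (n : ℕ) :
    Summable (fun rk : ℕ × ℕ => C * (s ^ rk.1 *
      ((Nat.ascFactorial n rk.2 : ℝ) / (Nat.factorial rk.2) * q ^ rk.2))) := by
  have hq' : |q| < 1 := by rw [abs_of_nonneg hq0]; exact hq1
  have h1 : Summable (fun r : ℕ => ‖s ^ r‖) :=
    (summable_geometric_of_lt_one hs0 hs1).abs.congr (by simp [abs_pow])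
  have h2 : Summable (fun k : ℕ =>
      ‖(Nat.ascFactorial n k : ℝ) / (Nat.factorial k) * q ^ k‖) :=
    (negBinom' hq' n).summable.abs.congr (fun k => rfl)
  exact ((summable_mul_of_summable_norm h1 h2)).mul_left C

include hs0 hs1 hq0 hq1 in
lemma Fsh_inner_tsum (C : ℝ) (n : ℕ) :
    ∑' rk : ℕ × ℕ, C * (s ^ rk.1 *
      ((Nat.ascFactorial n rk.2 : ℝ) / (Nat.factorial rk.2) * q ^ rk.2))
      = C * ((1 - s)⁻¹ * ((1 - q) ^ n)⁻¹) := by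
  have hq' : |q| < 1 := by rw [abs_of_nonneg hq0]; exact hq1
  have h1 : Summable (fun r : ℕ => ‖s ^ r‖) :=
    (summable_geometric_of_lt_one hs0 hs1).abs.congr (by simp [abs_pow])
  have h2 : Summable (fun k : ℕ =>
      ‖(Nat.ascFactorial n k : ℝ) / (Nat.factorial k) * q ^ k‖) :=
    (negBinom' hq' n).summable.abs.congr (fun k => rfl)
  rw [tsum_mul_left]
  congr 1
  rw [← tsum_geometric_of_lt_one hs0 hs1, ← (negBinom' hq' n).tsum_eq,
    ← tsum_mul_tsum_of_summable_norm h1 h2]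

include hs0 hs1 hq0 hq1 hu in
lemma Fsh_summable : Summable (Fsh u s q) := by
  rw [← summable_abs_iff]
  have habs : (fun p => |Fsh u s q p|) = Fsh |u| s q := funext (Fsh_abs hs0 hq0)
  rw [habs]
  have h1q : 0 < 1 - q := by linarith
  have hu1 : |u| / (1 - q) < 1 := (div_lt_one h1q).2 hu
  refine (summable_prod_of_nonneg (fun p => Fsh_nonneg hs0 hq0 (abs_nonneg u) p)).2 ⟨?_, ?_⟩
  · intro n
    exact Fsh_inner_summable hs0 hs1 hq0 hq1 (|u| ^ n) n
  · apply Summable.congr (f := fun n : ℕ =>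
      ((1 - s)⁻¹ * (|u| / (1 - q)) ^ n))
    · exact ((summable_geometric_of_lt_one (by positivity) hu1).mul_left _)
    · intro n
      rw [show (fun rk : ℕ × ℕ => Fsh |u| s q (n, rk)) = fun rk : ℕ × ℕ =>
        |u| ^ n * (s ^ rk.1 * ((Nat.ascFactorial n rk.2 : ℝ) / (Nat.factorial rk.2) * q ^ rk.2))
        from rfl, Fsh_inner_tsum hs0 hs1 hq0 hq1 (|u| ^ n) n, div_pow, div_eq_mul_inv]
      ring

include hs0 hs1 hq0 hq1 hu in
lemma Fsh_tsum : ∑' p, Fsh u s q p = (1 - s)⁻¹ * ((1 - q) / (1 - q - u)) := by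
  have h1q : 0 < 1 - q := by linarith
  have hqu : 0 < 1 - q - u := by
    have := le_abs_self u; linarith
  have hu1 : ‖u / (1 - q)‖ < 1 := by
    rw [Real.norm_eq_abs, abs_div, abs_of_pos h1q]
    exact (div_lt_one h1q).2 hu
  rw [Summable.tsum_prod' (Fsh_summable hs0 hs1 hq0 hq1 hu)
      (fun n => Fsh_inner_summable hs0 hs1 hq0 hq1 (u ^ n) n)]
  have hfib : ∀ n : ℕ, ∑' rk : ℕ × ℕ, Fsh u s q (n, rk)
      = (1 - s)⁻¹ * (u / (1 - q)) ^ n := by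
    intro n
    rw [show (fun rk : ℕ × ℕ => Fsh u s q (n, rk)) = fun rk : ℕ × ℕ =>
      u ^ n * (s ^ rk.1 * ((Nat.ascFactorial n rk.2 : ℝ) / (Nat.factorial rk.2) * q ^ rk.2))
      from rfl, Fsh_inner_tsum hs0 hs1 hq0 hq1 (u ^ n) n, div_pow, div_eq_mul_inv]
    ring
  rw [tsum_congr hfib, tsum_mul_left, tsum_geometric_of_norm_lt_one hu1]
  rw [show 1 - u / (1 - q) = (1 - q - u) / (1 - q) by field_simp]
  rw [inv_div]
end

/-- Exponent of `t` in the flattened triple series. -/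
noncomputable def lapE (a : ℝ) (p : ℕ × ℕ × ℕ) : ℝ :=
  a * p.1 + p.2.1 + a * p.2.2

/-- Coefficient in the flattened triple series. -/
noncomputable def lapC (θ a ν : ℝ) (p : ℕ × ℕ × ℕ) : ℝ :=
  ((-ν) ^ p.1 * θ ^ p.2.1 * (θ ^ a) ^ p.2.2 *
    ((Nat.ascFactorial p.1 p.2.2 : ℝ) / (Nat.factorial p.2.2))) / Real.Gamma (lapE a p + 1)

lemma lapE_nonneg {a : ℝ} (ha : 0 < a) (p : ℕ × ℕ × ℕ) : 0 ≤ lapE a p := by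
  unfold lapE; positivity

lemma lapGamma_pos {a : ℝ} (ha : 0 < a) (p : ℕ × ℕ × ℕ) :
    0 < Real.Gamma (lapE a p + 1) :=
  Real.Gamma_pos_of_pos (by have := lapE_nonneg ha p; linarith)

lemma lapSplit {θ a ν w : ℝ} (hθ : 0 < θ) (ha : 0 < a) (hw : 0 < w) (p : ℕ × ℕ × ℕ) :
    lapC θ a ν p * (w⁻¹ ^ (lapE a p + 1) * Real.Gamma (lapE a p + 1))
      = w⁻¹ * Fsh (-ν / w ^ a) (θ / w) (θ ^ a / w ^ a) p := by
  obtain ⟨n, r, k⟩ := p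
  have hΓ : Real.Gamma (lapE a (n,r,k) + 1) ≠ 0 := (lapGamma_pos ha _).ne'
  have hwi : (0:ℝ) < w⁻¹ := inv_pos.2 hw
  have hwa : (0:ℝ) < w ^ a := Real.rpow_pos_of_pos hw a
  have hsplit : w⁻¹ ^ (lapE a (n,r,k) + 1)
      = ((w ^ a)⁻¹) ^ n * ((w⁻¹) ^ r * (((w ^ a)⁻¹) ^ k * w⁻¹)) := by
    unfold lapE
    rw [Real.rpow_add hwi, Real.rpow_add hwi, Real.rpow_add hwi, Real.rpow_one,
      Real.rpow_natCast, Real.rpow_mul hwi.le, Real.rpow_mul hwi.le,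
      Real.rpow_natCast, Real.rpow_natCast, ← Real.inv_rpow hw.le]
    simp only []
    ring
  rw [hsplit]
  unfold lapC Fsh
  rw [div_pow, div_pow, div_pow]
  simp only [inv_pow]
  field_simp

lemma lapTerm {θ a ν t : ℝ} (ha : 0 < a) (ht : 0 < t) (n r k : ℕ) :
    lapC θ a ν (n, r, k) * t ^ lapE a (n, r, k)
      = (-ν * t ^ a) ^ n * (θ * t) ^ r *
        ((Nat.ascFactorial n k : ℝ) * (θ ^ a * t ^ a) ^ k /
          ((Nat.factorial k : ℝ) * Real.Gamma (a * k + ((n : ℝ) * a + r + 1)))) := by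
  have hΓeq : lapE a (n,r,k) + 1 = a * k + ((n : ℝ) * a + r + 1) := by
    unfold lapE; push_cast; ring
  have hΓ : Real.Gamma (lapE a (n,r,k) + 1) ≠ 0 := (lapGamma_pos ha _).ne'
  have hk : ((Nat.factorial k : ℝ)) ≠ 0 := by positivity
  have htsplit : t ^ lapE a (n,r,k) = (t ^ a) ^ n * (t ^ (r:ℕ) * (t ^ a) ^ k) := by
    unfold lapE
    rw [Real.rpow_add ht, Real.rpow_add ht, Real.rpow_natCast,
      Real.rpow_mul ht.le, Real.rpow_mul ht.le, Real.rpow_natCast, Real.rpow_natCast]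
    simp only []
    ring
  rw [htsplit]
  unfold lapC
  rw [hΓeq]
  field_simp
  ring

theorem laplace_transform_tempered_mittagLeffler_survival
    (θ a ν : ℝ) (hθ : 0 < θ) (ha : 0 < a) (ha1 : a < 1) (hν : 0 < ν) :
    ∃ Z : ℝ, ∀ z > Z, 0 < z ∧
      ∫ t in Set.Ioi (0 : ℝ),
          Real.exp (-z * t) * (Real.exp (-θ * t) *
            ∑' n : ℕ, ∑' r : ℕ,
              (-ν * t ^ a) ^ n * (θ * t) ^ r * ML3nat a (n * a + r + 1) n (θ ^ a * t ^ a))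
        = ((z + θ) ^ a - θ ^ a) / (z * (((z + θ) ^ a - θ ^ a) + ν)) := by
  refine ⟨(ν + θ ^ a + 1) ^ a⁻¹, fun z hz => ?_⟩
  have hθa : 0 < θ ^ a := Real.rpow_pos_of_pos hθ a
  have hZpos : 0 < (ν + θ ^ a + 1) ^ a⁻¹ := Real.rpow_pos_of_pos (by positivity) _
  have hz0 : 0 < z := lt_trans hZpos hz
  refine ⟨hz0, ?_⟩
  set w := z + θ with hwdef
  have hw : 0 < w := by rw [hwdef]; positivity
  have hwa : 0 < w ^ a := Real.rpow_pos_of_pos hw a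
  have hkey : θ ^ a + ν < w ^ a := by
    have h1 : ν + θ ^ a + 1 ≤ z ^ a := by
      have h2 : ((ν + θ ^ a + 1) ^ a⁻¹) ^ a ≤ z ^ a :=
        Real.rpow_le_rpow hZpos.le hz.le ha.le
      rwa [← Real.rpow_mul (by positivity), inv_mul_cancel₀ ha.ne', Real.rpow_one] at h2
    have h3 : z ^ a < w ^ a := Real.rpow_lt_rpow hz0.le (by rw [hwdef]; linarith) ha
    linarith
  have hθw : θ ^ a < w ^ a := by linarith
  -- geometric parameters
  have hs0 : 0 ≤ θ / w := by positivity
  have hs1 : θ / w < 1 := (div_lt_one hw).2 (by rw [hwdef]; linarith)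
  have hq0 : 0 ≤ θ ^ a / w ^ a := by positivity
  have hq1 : θ ^ a / w ^ a < 1 := (div_lt_one hwa).2 hθw
  have huabs : |(-ν / w ^ a)| = ν / w ^ a := by
    rw [abs_div, abs_neg, abs_of_pos hν, abs_of_pos hwa]
  have hu : |(-ν / w ^ a)| < 1 - θ ^ a / w ^ a := by
    rw [huabs, show (1 : ℝ) - θ ^ a / w ^ a = (w ^ a - θ ^ a) / w ^ a by field_simp]
    gcongr
    · linarith
  have hu2 : |ν / w ^ a| < 1 - θ ^ a / w ^ a := by
    rw [abs_of_pos (by positivity), ← huabs]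
    exact hu
  -- summability of the positive version
  have hFsumAbs : Summable (Fsh (ν / w ^ a) (θ / w) (θ ^ a / w ^ a)) :=
    Fsh_summable hs0 hs1 hq0 hq1 hu2
  have hFsum : Summable (Fsh (-ν / w ^ a) (θ / w) (θ ^ a / w ^ a)) :=
    Fsh_summable hs0 hs1 hq0 hq1 hu
  -- measurability
  have hmeas : ∀ p : ℕ × ℕ × ℕ, AEStronglyMeasurable
      (fun t : ℝ => Real.exp (-(w * t)) * (lapC θ a ν p * t ^ lapE a p))
      (volume.restrict (Ioi 0)) := by
    intro p
    have hcont : Continuous fun t : ℝ =>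
        Real.exp (-(w * t)) * (lapC θ a ν p * t ^ lapE a p) := by
      apply Continuous.mul
      · exact Real.continuous_exp.comp (continuous_const.mul continuous_id).neg
      · apply Continuous.mul continuous_const
        refine continuous_iff_continuousAt.2 fun x => ?_
        exact Real.continuousAt_rpow_const x _ (Or.inr (lapE_nonneg ha p))
    exact hcont.aestronglyMeasurable
  -- the lintegral of each term
  have hlint : ∀ p : ℕ × ℕ × ℕ,
      (∫⁻ t in Ioi (0:ℝ), ‖Real.exp (-(w * t)) * (lapC θ a ν p * t ^ lapE a p)‖₊)
        = ENNReal.ofReal (w⁻¹ * Fsh (ν / w ^ a) (θ / w) (θ ^ a / w ^ a) p) := by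
    intro p
    rw [gammaLint hw (lapE_nonneg ha p)]
    congr 1
    have h1 : |lapC θ a ν p| * (w⁻¹ ^ (lapE a p + 1) * Real.Gamma (lapE a p + 1))
        = |lapC θ a ν p * (w⁻¹ ^ (lapE a p + 1) * Real.Gamma (lapE a p + 1))| := by
      rw [abs_mul]
      congr 1
      rw [abs_of_nonneg]
      have h2 : (0:ℝ) < w⁻¹ ^ (lapE a p + 1) := Real.rpow_pos_of_pos (by positivity) _
      have h3 := lapGamma_pos ha p
      positivity
    rw [h1, lapSplit hθ ha hw p, abs_mul, abs_of_pos (inv_pos.2 hw),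
      Fsh_abs hs0 hq0, huabs]
  have hne : (∑' p : ℕ × ℕ × ℕ,
      ∫⁻ t in Ioi (0:ℝ), ‖Real.exp (-(w * t)) * (lapC θ a ν p * t ^ lapE a p)‖₊) ≠ ⊤ := by
    rw [tsum_congr hlint, ← ENNReal.ofReal_tsum_of_nonneg
      (fun p => mul_nonneg (by positivity) (Fsh_nonneg hs0 hq0 (by positivity) p))
      (hFsumAbs.mul_left w⁻¹)]
    exact ENNReal.ofReal_ne_top
  -- interchange of sum and integral
  have key := MeasureTheory.integral_tsum (μ := volume.restrict (Ioi (0:ℝ)))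
      (f := fun (p : ℕ × ℕ × ℕ) (t : ℝ) =>
        Real.exp (-(w * t)) * (lapC θ a ν p * t ^ lapE a p)) hmeas hne
  -- a.e. summability
  have hae_sum : ∀ᵐ t ∂(volume.restrict (Ioi (0:ℝ))),
      Summable fun p : ℕ × ℕ × ℕ =>
        ‖Real.exp (-(w * t)) * (lapC θ a ν p * t ^ lapE a p)‖ := by
    have hmeas' : ∀ p : ℕ × ℕ × ℕ, AEMeasurable (fun t : ℝ =>
        (‖Real.exp (-(w * t)) * (lapC θ a ν p * t ^ lapE a p)‖₊ : ENNReal))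
        (volume.restrict (Ioi 0)) := fun p => (hmeas p).enorm
    have hlt := ae_lt_top' (AEMeasurable.ennreal_tsum hmeas')
      (by rw [lintegral_tsum hmeas']; exact hne)
    refine hlt.mono fun t ht => ?_
    have h4 := ENNReal.tsum_coe_ne_top_iff_summable_coe.1 ht.ne
    simpa [coe_nnnorm] using h4
  -- a.e. rewriting of the integrand
  have hcongr : ∀ᵐ t ∂(volume.restrict (Ioi (0:ℝ))),
      Real.exp (-z * t) * (Real.exp (-θ * t) * ∑' n : ℕ, ∑' r : ℕ,
        (-ν * t ^ a) ^ n * (θ * t) ^ r * ML3nat a (n * a + r + 1) n (θ ^ a * t ^ a))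
      = ∑' p : ℕ × ℕ × ℕ, Real.exp (-(w * t)) * (lapC θ a ν p * t ^ lapE a p) := by
    filter_upwards [hae_sum, ae_restrict_mem measurableSet_Ioi] with t hsumt ht
    have ht0 : (0:ℝ) < t := ht
    have hFt : Summable fun p : ℕ × ℕ × ℕ =>
        Real.exp (-(w * t)) * (lapC θ a ν p * t ^ lapE a p) := Summable.of_norm hsumt
    have hg : Summable fun p : ℕ × ℕ × ℕ => lapC θ a ν p * t ^ lapE a p := by
      have h2 := hFt.mul_left (Real.exp (w * t))
      refine h2.congr fun p => ?_
      rw [← mul_assoc, ← Real.exp_add, add_neg_cancel, Real.exp_zero, one_mul]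
    have hexp : Real.exp (-z * t) * Real.exp (-θ * t) = Real.exp (-(w * t)) := by
      rw [← Real.exp_add, hwdef]
      congr 1
      ring
    have hflat : (∑' p : ℕ × ℕ × ℕ, lapC θ a ν p * t ^ lapE a p)
        = ∑' n : ℕ, ∑' r : ℕ,
          (-ν * t ^ a) ^ n * (θ * t) ^ r * ML3nat a (n * a + r + 1) n (θ ^ a * t ^ a) := by
      rw [Summable.tsum_prod' hg fun n => hg.prod_factor n]
      refine tsum_congr fun n => ?_
      rw [Summable.tsum_prod' (hg.prod_factor n) fun r => (hg.prod_factor n).prod_factor r]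
      refine tsum_congr fun r => ?_
      unfold ML3nat
      rw [← tsum_mul_left]
      refine tsum_congr fun k => ?_
      exact lapTerm ha ht0 n r k
    rw [← mul_assoc, hexp, ← hflat, ← tsum_mul_left]
  rw [MeasureTheory.integral_congr_ae hcongr, key,
    tsum_congr (fun p => gammaInt (c := lapC θ a ν p) hw (lapE_nonneg ha p)),
    tsum_congr (fun p => lapSplit hθ ha hw p), tsum_mul_left,
    Fsh_tsum hs0 hs1 hq0 hq1 hu]
  -- final algebra
  have hwne : w ≠ 0 := hw.ne'
  have hwane : w ^ a ≠ 0 := hwa.ne'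
  have hbig : (0:ℝ) < w ^ a - θ ^ a + ν := by linarith
  have e1 : 1 - θ / w = z / w := by
    field_simp [hwdef]
    linarith
  have e2 : 1 - θ ^ a / w ^ a = (w ^ a - θ ^ a) / w ^ a := by field_simp
  rw [e1, e2, show (w ^ a - θ ^ a) / w ^ a - -ν / w ^ a = (w ^ a - θ ^ a + ν) / w ^ a by ring]
  have e4 : (w ^ a - θ ^ a) / w ^ a / ((w ^ a - θ ^ a + ν) / w ^ a)
      = (w ^ a - θ ^ a) / (w ^ a - θ ^ a + ν) := by
    field_simp
  rw [e4, inv_div]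
  field_simp
end
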